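/- arXiv:2401.10676 — 3 statements merged into one kernel-verified Lean document; each statement's English description precedes it below -/
import Mathlib

section
/- Let ε > 0, let N ≥ 1 be an integer, and let x be a strictly ordered particle solution on [0,∞). Then for every p ∈ (1,∞] and every t ≥ 0, ‖ρ^N(·,t)‖_{L^p(ℝ)} ≤ ‖ρ^N(·,0)‖_{L^p(ℝ)}. -/
open MeasureTheory Real Set
open scoped ENNReal

/-- Scaled Morse potential `W_ε(x) = (1/(2ε)) e^{-|x|/ε}`. -/
noncomputable def Morse (ε x : ℝ) : ℝ := (1 / (2 * ε)) * Real.exp (-|x| / ε)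

/-- Derivative of the scaled Morse potential,
`W_ε'(x) = -(1/(2ε²)) sign(x) e^{-|x|/ε}`. -/
noncomputable def Morse' (ε x : ℝ) : ℝ :=
  -(1 / (2 * ε ^ 2)) * Real.sign x * Real.exp (-|x| / ε)

/-- Right-hand side of the particle ODE system:
`(1/N) ∑_{k=0}^{N-1} (W_ε(x_{k+1}-x_i) - W_ε(x_k-x_i))/(x_{k+1}-x_k)`. -/
noncomputable def particleRHS (ε : ℝ) (N : ℕ) (x : ℕ → ℝ) (i : ℕ) : ℝ :=
  (1 / (N : ℝ)) * ∑ k ∈ Finset.range N,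
    (Morse ε (x (k + 1) - x i) - Morse ε (x k - x i)) / (x (k + 1) - x k)

/-- A strictly ordered particle solution on `[0,∞)`:  a differentiable curve
`x = (x_0,…,x_N)` with `x_0(t) < ⋯ < x_N(t)` for all `t ≥ 0`, solving the particle ODE. -/
def IsParticleSol (ε : ℝ) (N : ℕ) (x : ℝ → ℕ → ℝ) : Prop :=
  (∀ t : ℝ, 0 ≤ t → ∀ i < N, x t i < x t (i + 1)) ∧
  (∀ i ≤ N, ∀ t : ℝ, 0 ≤ t →
    HasDerivWithinAt (fun s => x s i) (particleRHS ε N (x t) i) (Set.Ici 0) t)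

/-- The discrete (piecewise constant) density
`ρ^N(y,t) = ∑_{k=0}^{N-1} R_k(t) 1_{[x_k(t), x_{k+1}(t))}(y)` with `R_k = 1/(N d_k)`. -/
noncomputable def discDens (N : ℕ) (x : ℝ → ℕ → ℝ) (y t : ℝ) : ℝ :=
  ∑ k ∈ Finset.range N,
    Set.indicator (Set.Ico (x t k) (x t (k + 1)))
      (fun _ => 1 / ((N : ℝ) * (x t (k + 1) - x t k))) y

/-- Convolution in the space variable: `(W ∗ ρ)(x) = ∫ W(x-y) ρ(y) dy`. -/
noncomputable def conv (W ρ : ℝ → ℝ) (x : ℝ) : ℝ := ∫ y, W (x - y) * ρ y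

noncomputable def gfun (ε z : ℝ) : ℝ := ε / 2 * Real.exp (-|z| / ε) + |z| / 2

noncomputable def amat (ε : ℝ) (X : ℕ → ℝ) (i k : ℕ) : ℝ :=
  gfun ε (X (k+1) - X i) + gfun ε (X k - X (i+1))
    - gfun ε (X k - X i) - gfun ε (X (k+1) - X (i+1))

lemma gfun_even (ε z : ℝ) : gfun ε (-z) = gfun ε z := by simp [gfun]

lemma gfun_even' (ε a b : ℝ) : gfun ε (a - b) = gfun ε (b - a) := by
  rw [← gfun_even]; ring_nf

lemma Bident (ε : ℝ) (hε : ε ≠ 0) (X : ℕ → ℝ) (i k : ℕ) :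
    (Morse ε (X (k+1) - X (i+1)) - Morse ε (X k - X (i+1)))
      - (Morse ε (X (k+1) - X i) - Morse ε (X k - X i))
    = ((|X (k+1) - X i| - |X (k+1) - X (i+1)| - |X k - X i| + |X k - X (i+1)|) / 2
        - amat ε X i k) / ε ^ 2 := by
  simp only [Morse, amat, gfun]
  field_simp
  ring

lemma exp_helper {ε : ℝ} (hε : 0 < ε) {B C δ : ℝ} (hBC : B ≤ C) (hδ : 0 ≤ δ) :
    Real.exp (-C / ε) + Real.exp (-(B + δ) / ε)
      ≤ Real.exp (-(C + δ) / ε) + Real.exp (-B / ε) := by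
  have e1 : Real.exp (-(C + δ) / ε) = Real.exp (-C / ε) * Real.exp (-δ / ε) := by
    rw [← Real.exp_add]; ring_nf
  have e2 : Real.exp (-(B + δ) / ε) = Real.exp (-B / ε) * Real.exp (-δ / ε) := by
    rw [← Real.exp_add]; ring_nf
  have h3 : Real.exp (-δ / ε) ≤ 1 := by
    apply Real.exp_le_one_iff.mpr
    apply div_nonpos_of_nonpos_of_nonneg (by linarith) hε.le
  have h4 : Real.exp (-C / ε) ≤ Real.exp (-B / ε) := by
    apply Real.exp_le_exp.mpr
    have : -C ≤ -B := by linarith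
    exact (div_le_div_iff_of_pos_right hε).mpr this
  nlinarith [mul_nonneg (sub_nonneg.2 h3) (sub_nonneg.2 h4)]

lemma quad_nonneg_right {ε : ℝ} (hε : 0 < ε) {u v a b : ℝ} (huv : u ≤ v) (hab : a ≤ b)
    (hva : v ≤ a) :
    0 ≤ gfun ε (b - u) + gfun ε (a - v) - gfun ε (a - u) - gfun ε (b - v) := by
  have h1 : (0:ℝ) ≤ a - v := by linarith
  have h2 : (0:ℝ) ≤ a - u := by linarith
  have h3 : (0:ℝ) ≤ b - v := by linarith
  have h4 : (0:ℝ) ≤ b - u := by linarith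
  have key := exp_helper hε (show a - v ≤ a - u by linarith) (show (0:ℝ) ≤ b - a by linarith)
  have e1 : -(a - u + (b - a)) / ε = -(b - u) / ε := by ring
  have e2 : -((a - v) + (b - a)) / ε = -(b - v) / ε := by ring
  rw [e1, e2] at key
  simp only [gfun, abs_of_nonneg h1, abs_of_nonneg h2, abs_of_nonneg h3, abs_of_nonneg h4]
  nlinarith [key]

lemma quad_nonneg_diag {ε : ℝ} (hε : 0 < ε) {u v : ℝ} (huv : u ≤ v) :
    0 ≤ gfun ε (v - u) + gfun ε (u - v) - gfun ε (u - u) - gfun ε (v - v) := by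
  have hd : (0:ℝ) ≤ v - u := by linarith
  have h := Real.add_one_le_exp (-((v - u) / ε))
  simp only [gfun, sub_self, abs_zero, abs_of_nonneg hd, abs_of_nonpos (by linarith : u - v ≤ 0)]
  have e : -(u - v) = v - u := by ring
  rw [e, neg_zero, zero_div, Real.exp_zero, neg_div]
  have hr : ε * ((v - u) / ε) = v - u := by field_simp
  nlinarith [mul_le_mul_of_nonneg_left h hε.le, hr]

lemma quad_nonneg {ε : ℝ} (hε : 0 < ε) {u v a b : ℝ} (huv : u ≤ v) (hab : a ≤ b)
    (hcase : b ≤ u ∨ (a = u ∧ b = v) ∨ v ≤ a) :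
    0 ≤ gfun ε (b - u) + gfun ε (a - v) - gfun ε (a - u) - gfun ε (b - v) := by
  rcases hcase with h | ⟨rfl, rfl⟩ | h
  · have := quad_nonneg_right hε hab huv h
    calc (0:ℝ) ≤ gfun ε (v - a) + gfun ε (u - b) - gfun ε (u - a) - gfun ε (v - b) := this
      _ = gfun ε (b - u) + gfun ε (a - v) - gfun ε (a - u) - gfun ε (b - v) := by
          rw [gfun_even' ε v a, gfun_even' ε u b, gfun_even' ε u a, gfun_even' ε v b]; ring
  · exact quad_nonneg_diag hε hab
  · exact quad_nonneg_right hε huv hab h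

lemma Xmono {N : ℕ} {X : ℕ → ℝ} (hord : ∀ i < N, X i < X (i+1)) :
    ∀ j ≤ N, ∀ i ≤ j, X i ≤ X j := by
  intro j hj
  induction j with
  | zero => intro i hi; simp [Nat.le_zero.mp hi]
  | succ n ih =>
    intro i hi
    rcases Nat.eq_or_lt_of_le hi with rfl | h
    · rfl
    · exact le_trans (ih (by omega) i (by omega)) (hord n (by omega)).le

lemma sval {N : ℕ} {X : ℕ → ℝ} (hord : ∀ i < N, X i < X (i+1)) {i k : ℕ}
    (hi : i < N) (hk : k < N) :
    |X (k+1) - X i| - |X (k+1) - X (i+1)| - |X k - X i| + |X k - X (i+1)|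
      = if k = i then 2 * (X (i+1) - X i) else 0 := by
  rcases lt_trichotomy k i with h | rfl | h
  · have h1 : X (k+1) ≤ X i := Xmono hord i (by omega) (k+1) (by omega)
    have h2 : X (k+1) ≤ X (i+1) := Xmono hord (i+1) (by omega) (k+1) (by omega)
    have h3 : X k ≤ X i := Xmono hord i (by omega) k (by omega)
    have h4 : X k ≤ X (i+1) := Xmono hord (i+1) (by omega) k (by omega)
    rw [abs_of_nonpos (by linarith), abs_of_nonpos (by linarith),
      abs_of_nonpos (by linarith), abs_of_nonpos (by linarith), if_neg (by omega)]
    ring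
  · have h1 : X k ≤ X (k+1) := (hord k hk).le
    rw [if_pos rfl]
    simp only [sub_self, abs_zero]
    rw [abs_of_nonneg (by linarith), abs_of_nonpos (by linarith)]
    ring
  · have h1 : X (i+1) ≤ X k := Xmono hord k (by omega) (i+1) (by omega)
    have h2 : X i ≤ X k := Xmono hord k (by omega) i (by omega)
    have h3 : X (i+1) ≤ X (k+1) := Xmono hord (k+1) (by omega) (i+1) (by omega)
    have h4 : X i ≤ X (k+1) := Xmono hord (k+1) (by omega) i (by omega)
    rw [abs_of_nonneg (by linarith), abs_of_nonneg (by linarith),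
      abs_of_nonneg (by linarith), abs_of_nonneg (by linarith), if_neg (by omega)]
    ring

lemma amat_nonneg {ε : ℝ} (hε : 0 < ε) {N : ℕ} {X : ℕ → ℝ} (hord : ∀ i < N, X i < X (i+1))
    {i k : ℕ} (hi : i < N) (hk : k < N) : 0 ≤ amat ε X i k := by
  have huv : X i ≤ X (i+1) := (hord i hi).le
  have hab : X k ≤ X (k+1) := (hord k hk).le
  apply quad_nonneg hε huv hab
  rcases lt_trichotomy k i with h | rfl | h
  · exact Or.inl (Xmono hord i (by omega) (k+1) (by omega))
  · exact Or.inr (Or.inl ⟨rfl, rfl⟩)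
  · exact Or.inr (Or.inr (Xmono hord k (by omega) (i+1) (by omega)))

lemma amat_symm (ε : ℝ) (X : ℕ → ℝ) (i k : ℕ) : amat ε X i k = amat ε X k i := by
  simp only [amat]
  rw [gfun_even' ε (X (i+1)) (X k), gfun_even' ε (X i) (X (k+1)),
    gfun_even' ε (X i) (X k), gfun_even' ε (X (i+1)) (X (k+1))]
  ring

lemma gdiff_le {ε : ℝ} (hε : 0 < ε) {A B : ℝ} (h0 : 0 ≤ B) (h : B ≤ A) :
    gfun ε A - gfun ε B ≤ (A - B) / 2 := by
  have hA : (0:ℝ) ≤ A := le_trans h0 h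
  have hexp : Real.exp (-A / ε) ≤ Real.exp (-B / ε) := by
    apply Real.exp_le_exp.mpr
    have : -A ≤ -B := by linarith
    exact (div_le_div_iff_of_pos_right hε).mpr this
  simp only [gfun, abs_of_nonneg h0, abs_of_nonneg hA]
  nlinarith [hexp]

lemma amat_rowsum (ε : ℝ) (N : ℕ) (X : ℕ → ℝ) (i : ℕ) :
    ∑ k ∈ Finset.range N, amat ε X i k
      = (gfun ε (X N - X i) - gfun ε (X N - X (i+1)))
        - (gfun ε (X 0 - X i) - gfun ε (X 0 - X (i+1))) := by
  have h := Finset.sum_range_sub (fun m => gfun ε (X m - X i) - gfun ε (X m - X (i+1))) N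
  rw [← h]
  apply Finset.sum_congr rfl
  intro k _
  simp only [amat]; ring

lemma amat_rowsum_le {ε : ℝ} (hε : 0 < ε) {N : ℕ} {X : ℕ → ℝ}
    (hord : ∀ i < N, X i < X (i+1)) {i : ℕ} (hi : i < N) :
    ∑ k ∈ Finset.range N, amat ε X i k ≤ X (i+1) - X i := by
  rw [amat_rowsum]
  have h1 : X i ≤ X (i+1) := (hord i hi).le
  have h2 : X (i+1) ≤ X N := Xmono hord N le_rfl (i+1) (by omega)
  have h3 : X 0 ≤ X i := Xmono hord i (by omega) 0 (by omega)
  have e1 : gfun ε (X N - X i) - gfun ε (X N - X (i+1)) ≤ (X (i+1) - X i) / 2 := by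
    have := gdiff_le hε (show (0:ℝ) ≤ X N - X (i+1) by linarith)
      (show X N - X (i+1) ≤ X N - X i by linarith)
    linarith
  have e2 : gfun ε (X (i+1) - X 0) - gfun ε (X i - X 0) ≤ (X (i+1) - X i) / 2 := by
    have := gdiff_le hε (show (0:ℝ) ≤ X i - X 0 by linarith)
      (show X i - X 0 ≤ X (i+1) - X 0 by linarith)
    linarith
  rw [gfun_even' ε (X 0) (X i), gfun_even' ε (X 0) (X (i+1))]
  linarith

lemma Dsum {ε : ℝ} (hε : 0 < ε) {N : ℕ} {X : ℕ → ℝ} (hord : ∀ i < N, X i < X (i+1))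
    {i : ℕ} (hi : i < N) :
    particleRHS ε N X (i+1) - particleRHS ε N X i
      = (1 - ∑ k ∈ Finset.range N, amat ε X i k / (X (k+1) - X k)) / (N * ε^2) := by
  have hεne : (ε:ℝ) ≠ 0 := hε.ne'
  have hterm : ∀ k ∈ Finset.range N,
      (Morse ε (X (k+1) - X (i+1)) - Morse ε (X k - X (i+1))) / (X (k+1) - X k)
        - (Morse ε (X (k+1) - X i) - Morse ε (X k - X i)) / (X (k+1) - X k)
      = ((if k = i then (1:ℝ) else 0) - amat ε X i k / (X (k+1) - X k)) / ε^2 := by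
    intro k hk
    have hkN := Finset.mem_range.mp hk
    have hdk : X (k+1) - X k ≠ 0 := ne_of_gt (by linarith [hord k hkN])
    rw [div_sub_div_same, Bident ε hεne X i k, sval hord hi hkN]
    by_cases hki : k = i
    · subst hki
      rw [if_pos rfl, if_pos rfl]
      field_simp
    · rw [if_neg hki, if_neg hki]
      field_simp
      ring
  have hNne : (N:ℝ) ≠ 0 := Nat.cast_ne_zero.mpr (by omega)
  unfold particleRHS
  rw [← mul_sub, ← Finset.sum_sub_distrib, Finset.sum_congr rfl hterm, ← Finset.sum_div,
    Finset.sum_sub_distrib, Finset.sum_ite_eq' (Finset.range N) i (fun _ => (1:ℝ)),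
    if_pos (Finset.mem_range.mpr hi)]
  field_simp

lemma young_term {q : ℝ} (hq : 1 < q) {di dk : ℝ} (hdi : 0 < di) (hdk : 0 < dk) :
    di ^ (-q) / dk ≤ q/(q+1) * di ^ (-(q+1)) + 1/(q+1) * dk ^ (-(q+1)) := by
  have hq1 : (0:ℝ) < q + 1 := by linarith
  have h := Real.geom_mean_le_arith_mean2_weighted
    (w₁ := q/(q+1)) (w₂ := 1/(q+1)) (p₁ := di ^ (-(q+1))) (p₂ := dk ^ (-(q+1)))
    (by positivity) (by positivity) (by positivity) (by positivity)
    (by field_simp)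
  have e1 : (di ^ (-(q+1))) ^ (q/(q+1)) = di ^ (-q) := by
    rw [← Real.rpow_mul hdi.le]
    congr 1
    field_simp
  have e2 : (dk ^ (-(q+1))) ^ (1/(q+1)) = dk⁻¹ := by
    rw [← Real.rpow_mul hdk.le]
    have : -(q+1) * (1/(q+1)) = -1 := by field_simp
    rw [this, Real.rpow_neg_one]
  rw [e1, e2] at h
  rw [div_eq_mul_inv]
  exact h

lemma young_sum {N : ℕ} {d : ℕ → ℝ} (hd : ∀ k < N, 0 < d k) {A : ℕ → ℕ → ℝ}
    (hA0 : ∀ i < N, ∀ k < N, 0 ≤ A i k)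
    (hAs : ∀ i k, A i k = A k i)
    (hrow : ∀ i < N, ∑ k ∈ Finset.range N, A i k ≤ d i)
    {q : ℝ} (hq : 1 < q) :
    ∑ i ∈ Finset.range N, ∑ k ∈ Finset.range N, A i k * (d i ^ (-q) / d k)
      ≤ ∑ i ∈ Finset.range N, d i ^ (-q) := by
  have hq1 : (0:ℝ) < q + 1 := by linarith
  have step1 : ∑ i ∈ Finset.range N, ∑ k ∈ Finset.range N, A i k * (d i ^ (-q) / d k)
      ≤ ∑ i ∈ Finset.range N, ∑ k ∈ Finset.range N,
          A i k * (q/(q+1) * d i ^ (-(q+1)) + 1/(q+1) * d k ^ (-(q+1))) := by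
    apply Finset.sum_le_sum
    intro i hi
    apply Finset.sum_le_sum
    intro k hk
    have hiN := Finset.mem_range.mp hi
    have hkN := Finset.mem_range.mp hk
    exact mul_le_mul_of_nonneg_left
      (young_term hq (hd i hiN) (hd k hkN)) (hA0 i hiN k hkN)
  have hw1 : (0:ℝ) ≤ q/(q+1) := by positivity
  have hw2 : (0:ℝ) ≤ 1/(q+1) := by positivity
  have hww : q/(q+1) + 1/(q+1) = 1 := by field_simp
  have colrow : ∀ k < N, ∑ i ∈ Finset.range N, A i k ≤ d k := by
    intro k hk
    calc ∑ i ∈ Finset.range N, A i k = ∑ i ∈ Finset.range N, A k i :=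
          Finset.sum_congr rfl (fun i _ => (hAs i k))
      _ ≤ d k := hrow k hk
  have part1 : ∑ i ∈ Finset.range N, ∑ k ∈ Finset.range N, A i k * (q/(q+1) * d i ^ (-(q+1)))
      ≤ ∑ i ∈ Finset.range N, d i * (q/(q+1) * d i ^ (-(q+1))) := by
    apply Finset.sum_le_sum
    intro i hi
    have hiN := Finset.mem_range.mp hi
    rw [← Finset.sum_mul]
    exact mul_le_mul_of_nonneg_right (hrow i hiN)
      (mul_nonneg hw1 (Real.rpow_nonneg (hd i hiN).le _))
  have part2 : ∑ i ∈ Finset.range N, ∑ k ∈ Finset.range N, A i k * (1/(q+1) * d k ^ (-(q+1)))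
      ≤ ∑ k ∈ Finset.range N, d k * (1/(q+1) * d k ^ (-(q+1))) := by
    rw [Finset.sum_comm]
    apply Finset.sum_le_sum
    intro k hk
    have hkN := Finset.mem_range.mp hk
    rw [← Finset.sum_mul]
    exact mul_le_mul_of_nonneg_right (colrow k hkN)
      (mul_nonneg hw2 (Real.rpow_nonneg (hd k hkN).le _))
  have final : ∀ i ∈ Finset.range N, d i * (q/(q+1) * d i ^ (-(q+1)))
      + d i * (1/(q+1) * d i ^ (-(q+1))) = d i ^ (-q) := by
    intro i hi
    have hiN := Finset.mem_range.mp hi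
    have hne : d i ≠ 0 := (hd i hiN).ne'
    have hr : d i ^ (-q) = d i ^ (-(q+1)) * d i := by
      rw [← Real.rpow_add_one hne (-(q+1))]
      congr 1
      ring
    rw [hr]
    field_simp
  calc ∑ i ∈ Finset.range N, ∑ k ∈ Finset.range N, A i k * (d i ^ (-q) / d k)
      ≤ ∑ i ∈ Finset.range N, ∑ k ∈ Finset.range N,
          A i k * (q/(q+1) * d i ^ (-(q+1)) + 1/(q+1) * d k ^ (-(q+1))) := step1
    _ = ∑ i ∈ Finset.range N, ∑ k ∈ Finset.range N, A i k * (q/(q+1) * d i ^ (-(q+1)))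
        + ∑ i ∈ Finset.range N, ∑ k ∈ Finset.range N, A i k * (1/(q+1) * d k ^ (-(q+1))) := by
        simp only [mul_add, Finset.sum_add_distrib]
    _ ≤ ∑ i ∈ Finset.range N, d i * (q/(q+1) * d i ^ (-(q+1)))
        + ∑ i ∈ Finset.range N, d i * (1/(q+1) * d i ^ (-(q+1))) := add_le_add part1 part2
    _ = ∑ i ∈ Finset.range N, (d i * (q/(q+1) * d i ^ (-(q+1)))
        + d i * (1/(q+1) * d i ^ (-(q+1)))) := (Finset.sum_add_distrib).symm
    _ = ∑ i ∈ Finset.range N, d i ^ (-q) := Finset.sum_congr rfl final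

lemma key1 {ε : ℝ} (hε : 0 < ε) {N : ℕ} (hN : 1 ≤ N) {x : ℝ → ℕ → ℝ}
    (hx : IsParticleSol ε N x) {q : ℝ} (hq : 1 < q) {t : ℝ} (ht : 0 ≤ t) :
    ∑ k ∈ Finset.range N, (x t (k+1) - x t k) ^ (1 - q)
      ≤ ∑ k ∈ Finset.range N, (x 0 (k+1) - x 0 k) ^ (1 - q) := by
  set F : ℝ → ℝ := fun s => ∑ k ∈ Finset.range N, (x s (k+1) - x s k) ^ (1-q) with hF
  set G : ℝ → ℝ := fun s => ∑ k ∈ Finset.range N,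
    (1-q) * (x s (k+1) - x s k) ^ (-q)
      * (particleRHS ε N (x s) (k+1) - particleRHS ε N (x s) k) with hG
  have hder : ∀ s : ℝ, 0 ≤ s → HasDerivWithinAt F (G s) (Set.Ici 0) s := by
    intro s hs
    apply HasDerivWithinAt.fun_sum
    intro k hk
    have hkN := Finset.mem_range.mp hk
    have hdpos : 0 < x s (k+1) - x s k := by linarith [hx.1 s hs k hkN]
    have hinner : HasDerivWithinAt (fun u => x u (k+1) - x u k)
        (particleRHS ε N (x s) (k+1) - particleRHS ε N (x s) k) (Set.Ici 0) s :=
      (hx.2 (k+1) (by omega) s hs).sub (hx.2 k (by omega) s hs)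
    have houter := Real.hasDerivAt_rpow_const
      (x := x s (k+1) - x s k) (p := 1-q) (Or.inl hdpos.ne')
    have hcomp := houter.comp_hasDerivWithinAt s hinner
    have : (1-q) * (x s (k+1) - x s k) ^ (1-q-1)
        * (particleRHS ε N (x s) (k+1) - particleRHS ε N (x s) k)
        = (1-q) * (x s (k+1) - x s k) ^ (-q)
        * (particleRHS ε N (x s) (k+1) - particleRHS ε N (x s) k) := by
      rw [show (1-q-1) = -q by ring]
    rw [← this]
    exact hcomp
  have hGle : ∀ s : ℝ, 0 ≤ s → G s ≤ 0 := by
    intro s hs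
    have hord : ∀ i < N, x s i < x s (i+1) := hx.1 s hs
    have hd : ∀ k < N, 0 < x s (k+1) - x s k := fun k hk => by linarith [hord k hk]
    have hsum : ∑ k ∈ Finset.range N, (x s (k+1) - x s k) ^ (-q)
        * ((1 - ∑ j ∈ Finset.range N, amat ε (x s) k j / (x s (j+1) - x s j)) / (N * ε^2))
        ≥ 0 := by
      have hys := young_sum (N := N) (d := fun k => x s (k+1) - x s k) hd
        (A := fun i k => amat ε (x s) i k)
        (fun i hi k hk => amat_nonneg hε hord hi hk)
        (fun i k => amat_symm ε (x s) i k)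
        (fun i hi => amat_rowsum_le hε hord hi) hq
      have hexp : ∀ k ∈ Finset.range N,
          (x s (k+1) - x s k) ^ (-q) * ∑ j ∈ Finset.range N, amat ε (x s) k j / (x s (j+1) - x s j)
          = ∑ j ∈ Finset.range N, amat ε (x s) k j
              * ((x s (k+1) - x s k) ^ (-q) / (x s (j+1) - x s j)) := by
        intro k _
        rw [Finset.mul_sum]
        exact Finset.sum_congr rfl (fun j _ => by ring)
      have h2 : ∑ k ∈ Finset.range N, (x s (k+1) - x s k) ^ (-q)
          * ∑ j ∈ Finset.range N, amat ε (x s) k j / (x s (j+1) - x s j)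
          ≤ ∑ k ∈ Finset.range N, (x s (k+1) - x s k) ^ (-q) := by
        rw [Finset.sum_congr rfl hexp]
        exact hys
      have hNε : (0:ℝ) < (N:ℝ) * ε^2 := by
        have : (0:ℝ) < (N:ℝ) := by exact_mod_cast Nat.pos_of_ne_zero (by omega)
        positivity
      have expand : ∀ k ∈ Finset.range N, (x s (k+1) - x s k) ^ (-q)
          * ((1 - ∑ j ∈ Finset.range N, amat ε (x s) k j / (x s (j+1) - x s j)) / (N * ε^2))
          = ((x s (k+1) - x s k) ^ (-q)
            - (x s (k+1) - x s k) ^ (-q)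
              * ∑ j ∈ Finset.range N, amat ε (x s) k j / (x s (j+1) - x s j)) / (N * ε^2) := by
        intro k _; ring
      rw [Finset.sum_congr rfl expand, ← Finset.sum_div, Finset.sum_sub_distrib]
      apply div_nonneg _ hNε.le
      linarith [h2]
    have hGs : G s = (1-q) * ∑ k ∈ Finset.range N, (x s (k+1) - x s k) ^ (-q)
        * ((1 - ∑ j ∈ Finset.range N, amat ε (x s) k j / (x s (j+1) - x s j)) / (N * ε^2)) := by
      rw [hG, Finset.mul_sum]
      apply Finset.sum_congr rfl
      intro k hk
      rw [Dsum hε hord (Finset.mem_range.mp hk)]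
      ring
    rw [hGs]
    apply mul_nonpos_of_nonpos_of_nonneg (by linarith) hsum
  have hanti : AntitoneOn F (Set.Ici 0) := by
    apply antitoneOn_of_deriv_nonpos (convex_Ici 0)
    · exact fun u hu => (hder u hu).continuousWithinAt
    · intro u hu
      rw [interior_Ici] at hu
      exact (((hder u (le_of_lt hu)).hasDerivAt (Ici_mem_nhds hu)).differentiableAt).differentiableWithinAt
    · intro u hu
      rw [interior_Ici] at hu
      rw [((hder u (le_of_lt hu)).hasDerivAt (Ici_mem_nhds hu)).deriv]
      exact hGle u (le_of_lt hu)
  exact hanti (Set.self_mem_Ici) ht ht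

section dens

variable {N : ℕ} {x : ℝ → ℕ → ℝ} {s : ℝ}

lemma Ico_disj (hord : ∀ i < N, x s i < x s (i+1)) {j k : ℕ} (hj : j < N) (hk : k < N)
    (hjk : j ≠ k) :
    Disjoint (Set.Ico (x s j) (x s (j+1))) (Set.Ico (x s k) (x s (k+1))) := by
  rw [Set.disjoint_left]
  rintro y ⟨h1, h2⟩ ⟨h3, h4⟩
  rcases Nat.lt_or_ge j k with h | h
  · have : x s (j+1) ≤ x s k := Xmono hord k (by omega) (j+1) (by omega)
    linarith
  · have : x s (k+1) ≤ x s j := Xmono hord j (by omega) (k+1) (by omega)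
    linarith

lemma densval (hord : ∀ i < N, x s i < x s (i+1)) {k : ℕ} (hk : k < N) {y : ℝ}
    (hy : y ∈ Set.Ico (x s k) (x s (k+1))) :
    discDens N x y s = 1 / ((N:ℝ) * (x s (k+1) - x s k)) := by
  unfold discDens
  rw [Finset.sum_eq_single_of_mem k (Finset.mem_range.mpr hk)]
  · rw [Set.indicator_of_mem hy]
  · intro j hj hjk
    rw [Set.indicator_of_notMem]
    exact fun hyj => (Set.disjoint_left.mp
      (Ico_disj hord (Finset.mem_range.mp hj) hk hjk) hyj) hy

lemma denszero {y : ℝ}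
    (hy : y ∉ ⋃ k ∈ Finset.range N, Set.Ico (x s k) (x s (k+1))) :
    discDens N x y s = 0 := by
  unfold discDens
  apply Finset.sum_eq_zero
  intro k hk
  rw [Set.indicator_of_notMem]
  intro hyk
  exact hy (Set.mem_biUnion hk hyk)

lemma densnonneg (hord : ∀ i < N, x s i < x s (i+1)) (y : ℝ) :
    0 ≤ discDens N x y s := by
  apply Finset.sum_nonneg
  intro k hk
  apply Set.indicator_nonneg
  intro _ _
  have hkN := Finset.mem_range.mp hk
  have h := hord k hkN
  have hd : 0 < x s (k+1) - x s k := by linarith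
  have hNp : (0:ℝ) < (N:ℝ) := by exact_mod_cast (by omega : 0 < N)
  positivity

end dens

lemma lint_eq {N : ℕ} {x : ℝ → ℕ → ℝ} {s : ℝ}
    (hord : ∀ i < N, x s i < x s (i+1)) {q : ℝ} (hq : 0 < q) :
    ∫⁻ y, (‖discDens N x y s‖₊ : ℝ≥0∞) ^ q
      = ∑ k ∈ Finset.range N,
          ENNReal.ofReal ((1 / ((N:ℝ) * (x s (k+1) - x s k))) ^ q * (x s (k+1) - x s k)) := by
  set I : ℕ → Set ℝ := fun k => Set.Ico (x s k) (x s (k+1)) with hI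
  have hImeas : ∀ k, MeasurableSet (I k) := fun k => measurableSet_Ico
  set U : Set ℝ := ⋃ k ∈ Finset.range N, I k with hU
  have hUmeas : MeasurableSet U := Finset.measurableSet_biUnion _ (fun k _ => hImeas k)
  rw [← lintegral_add_compl _ hUmeas]
  have hcompl : ∫⁻ y in Uᶜ, (‖discDens N x y s‖₊ : ℝ≥0∞) ^ q = 0 := by
    rw [setLIntegral_congr_fun hUmeas.compl
      (fun y hy => ?_), lintegral_zero]
    rw [denszero hy]
    simp [ENNReal.zero_rpow_of_pos hq]
  have hdisj : (↑(Finset.range N) : Set ℕ).PairwiseDisjoint I := by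
    intro j hj k hk hjk
    exact Ico_disj hord (Finset.mem_range.mp hj) (Finset.mem_range.mp hk) hjk
  have hunion : ∫⁻ y in U, (‖discDens N x y s‖₊ : ℝ≥0∞) ^ q
      = ∑ k ∈ Finset.range N, ∫⁻ y in I k, (‖discDens N x y s‖₊ : ℝ≥0∞) ^ q := by
    rw [hU, lintegral_biUnion_finset hdisj (fun k _ => hImeas k)]
  have hpiece : ∀ k ∈ Finset.range N, ∫⁻ y in I k, (‖discDens N x y s‖₊ : ℝ≥0∞) ^ q
      = ENNReal.ofReal ((1 / ((N:ℝ) * (x s (k+1) - x s k))) ^ q * (x s (k+1) - x s k)) := by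
    intro k hk
    have hkN := Finset.mem_range.mp hk
    have hdk : 0 < x s (k+1) - x s k := by linarith [hord k hkN]
    have hNp : (0:ℝ) < (N:ℝ) := by exact_mod_cast (by omega : 0 < N)
    have hRk : 0 ≤ 1 / ((N:ℝ) * (x s (k+1) - x s k)) := by positivity
    have hval : ∫⁻ y in I k, (‖discDens N x y s‖₊ : ℝ≥0∞) ^ q
        = ∫⁻ _ in I k, (ENNReal.ofReal (1 / ((N:ℝ) * (x s (k+1) - x s k)))) ^ q := by
      apply setLIntegral_congr_fun (hImeas k)
      intro y hy
      beta_reduce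
      rw [densval hord hkN hy, ← enorm_eq_nnnorm, Real.enorm_eq_ofReal hRk]
    rw [hval, setLIntegral_const, Real.volume_Ico,
      ENNReal.ofReal_rpow_of_nonneg hRk hq.le, ← ENNReal.ofReal_mul (by positivity)]
  rw [hcompl, add_zero, hunion, Finset.sum_congr rfl hpiece]

lemma mgap_mono {ε : ℝ} (hε : 0 < ε) {N : ℕ} (hN : 1 ≤ N) {x : ℝ → ℕ → ℝ}
    (hx : IsParticleSol ε N x) {t : ℝ} (ht : 0 ≤ t)
    (hne : (Finset.range N).Nonempty) :
    (Finset.range N).inf' hne (fun k => x 0 (k+1) - x 0 k)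
      ≤ (Finset.range N).inf' hne (fun k => x t (k+1) - x t k) := by
  set m0 := (Finset.range N).inf' hne (fun k => x 0 (k+1) - x 0 k) with hm0
  set mt := (Finset.range N).inf' hne (fun k => x t (k+1) - x t k) with hmt
  have hm0pos : 0 < m0 := by
    rw [hm0, Finset.lt_inf'_iff]
    intro b hb
    linarith [hx.1 0 le_rfl b (Finset.mem_range.mp hb)]
  have hmtpos : 0 < mt := by
    rw [hmt, Finset.lt_inf'_iff]
    intro b hb
    linarith [hx.1 t ht b (Finset.mem_range.mp hb)]
  by_contra hcon
  push_neg at hcon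
  have claim : ∀ n : ℕ, m0 ^ n ≤ (N:ℝ) * mt ^ n := by
    intro n
    rcases Nat.eq_zero_or_pos n with rfl | hn
    · simpa using (show (1:ℝ) ≤ (N:ℝ) by exact_mod_cast hN)
    have hq : 1 < ((n:ℝ) + 1) := by
      have : (1:ℝ) ≤ (n:ℝ) := by exact_mod_cast hn
      linarith
    have hkey := key1 hε hN hx hq ht
    have h1q : 1 - ((n:ℝ) + 1) = -(n:ℝ) := by ring
    rw [h1q] at hkey
    obtain ⟨b, hb, hbe⟩ := Finset.exists_mem_eq_inf' hne (fun k => x t (k+1) - x t k)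
    have hlow : mt ^ (-(n:ℝ)) ≤ ∑ k ∈ Finset.range N, (x t (k+1) - x t k) ^ (-(n:ℝ)) := by
      rw [hmt, hbe]
      exact Finset.single_le_sum (f := fun k => (x t (k+1) - x t k) ^ (-(n:ℝ)))
        (fun k _ => Real.rpow_nonneg
          (by linarith [hx.1 t ht k (Finset.mem_range.mp ‹k ∈ Finset.range N›)]) _) hb
    have hupp : ∑ k ∈ Finset.range N, (x 0 (k+1) - x 0 k) ^ (-(n:ℝ))
        ≤ (N:ℝ) * m0 ^ (-(n:ℝ)) := by
      have := Finset.sum_le_card_nsmul (Finset.range N)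
        (fun k => (x 0 (k+1) - x 0 k) ^ (-(n:ℝ))) (m0 ^ (-(n:ℝ)))
        (fun k hk => Real.rpow_le_rpow_of_nonpos hm0pos
          (Finset.inf'_le _ hk)
          (by simp only [neg_nonpos]; exact_mod_cast Nat.zero_le n))
      simpa [Finset.card_range, nsmul_eq_mul] using this
    have hch : mt ^ (-(n:ℝ)) ≤ (N:ℝ) * m0 ^ (-(n:ℝ)) :=
      le_trans hlow (le_trans hkey hupp)
    rw [Real.rpow_neg hmtpos.le, Real.rpow_neg hm0pos.le,
      Real.rpow_natCast, Real.rpow_natCast] at hch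
    have hmtn : (0:ℝ) < mt ^ n := pow_pos hmtpos n
    have hm0n : (0:ℝ) < m0 ^ n := pow_pos hm0pos n
    have h2 := mul_le_mul_of_nonneg_left hch (mul_pos hmtn hm0n).le
    have e1 : mt ^ n * m0 ^ n * (mt ^ n)⁻¹ = m0 ^ n := by
      field_simp
    have e2 : mt ^ n * m0 ^ n * ((N:ℝ) * (m0 ^ n)⁻¹) = (N:ℝ) * mt ^ n := by
      field_simp
    rw [e1, e2] at h2
    exact h2
  obtain ⟨n, hn⟩ := pow_unbounded_of_one_lt (N:ℝ) ((one_lt_div hmtpos).mpr hcon)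
  rw [div_pow] at hn
  have h2 : (N:ℝ) * mt ^ n < m0 ^ n :=
    (lt_div_iff₀ (pow_pos hmtpos n)).mp hn
  linarith [claim n]

/-- `L^p` contractivity. For a strictly ordered particle solution and any
`p ∈ (1,∞]`, `‖ρ^N(·,t)‖_{L^p} ≤ ‖ρ^N(·,0)‖_{L^p}` for all `t ≥ 0`. -/
theorem stmt8 (ε : ℝ) (hε : 0 < ε) (N : ℕ) (hN : 1 ≤ N) (x : ℝ → ℕ → ℝ)
    (hx : IsParticleSol ε N x) :
    ∀ p : ℝ≥0∞, 1 < p → ∀ t : ℝ, 0 ≤ t →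
      eLpNorm (fun y => discDens N x y t) p volume ≤
        eLpNorm (fun y => discDens N x y 0) p volume := by
  intro p hp t ht
  have hord0 : ∀ i < N, x 0 i < x 0 (i+1) := hx.1 0 le_rfl
  have hordt : ∀ i < N, x t i < x t (i+1) := hx.1 t ht
  have hne : (Finset.range N).Nonempty := Finset.nonempty_range_iff.mpr (by omega)
  have hNp : (0:ℝ) < (N:ℝ) := by exact_mod_cast (by omega : 0 < N)
  by_cases hptop : p = ∞
  · subst hptop
    rw [eLpNorm_exponent_top, eLpNorm_exponent_top]
    set m0 := (Finset.range N).inf' hne (fun k => x 0 (k+1) - x 0 k) with hm0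
    set mt := (Finset.range N).inf' hne (fun k => x t (k+1) - x t k) with hmt
    have hm0pos : 0 < m0 := by
      rw [hm0, Finset.lt_inf'_iff]
      intro b hb
      linarith [hord0 b (Finset.mem_range.mp hb)]
    have hmono : m0 ≤ mt := mgap_mono hε hN hx ht hne
    have hup : ∀ y, (‖discDens N x y t‖₊ : ℝ≥0∞) ≤ ENNReal.ofReal (1/((N:ℝ)*m0)) := by
      intro y
      by_cases hy : y ∈ ⋃ k ∈ Finset.range N, Set.Ico (x t k) (x t (k+1))
      · obtain ⟨k, hk, hyk⟩ := Set.mem_iUnion₂.mp hy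
        have hkN := Finset.mem_range.mp hk
        have hdk : 0 < x t (k+1) - x t k := by linarith [hordt k hkN]
        rw [densval hordt hkN hyk, ← enorm_eq_nnnorm, Real.enorm_eq_ofReal (by positivity)]
        apply ENNReal.ofReal_le_ofReal
        have hmtd : m0 ≤ x t (k+1) - x t k := le_trans hmono (Finset.inf'_le _ hk)
        apply one_div_le_one_div_of_le (by positivity)
        have := hNp
        nlinarith
      · rw [denszero hy]
        simp
    have h1 : eLpNormEssSup (fun y => discDens N x y t) volume
        ≤ ENNReal.ofReal (1/((N:ℝ)*m0)) :=
      essSup_le_of_ae_le _ (Filter.Eventually.of_forall hup)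
    refine le_trans h1 ?_
    obtain ⟨b, hb, hbe⟩ := Finset.exists_mem_eq_inf' hne (fun k => x 0 (k+1) - x 0 k)
    have hbN := Finset.mem_range.mp hb
    have hdb : 0 < x 0 (b+1) - x 0 b := by linarith [hord0 b hbN]
    by_contra hcon
    push_neg at hcon
    have hae := enorm_ae_le_eLpNormEssSup (fun y => discDens N x y 0) volume
    have hsub : Set.Ico (x 0 b) (x 0 (b+1)) ⊆
        {y | ¬ ((‖discDens N x y 0‖₊ : ℝ≥0∞)
          ≤ eLpNormEssSup (fun y => discDens N x y 0) volume)} := by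
      intro y hy
      simp only [Set.mem_setOf_eq]
      rw [densval hord0 hbN hy, ← enorm_eq_nnnorm, Real.enorm_eq_ofReal (by positivity)]
      intro hle
      apply absurd (lt_of_le_of_lt hle hcon)
      simp only [not_lt]
      apply ENNReal.ofReal_le_ofReal
      apply one_div_le_one_div_of_le (by positivity)
      have : m0 ≤ x 0 (b+1) - x 0 b := le_of_eq hbe
      nlinarith
    have hnull : volume {y | ¬ ((‖discDens N x y 0‖₊ : ℝ≥0∞)
        ≤ eLpNormEssSup (fun y => discDens N x y 0) volume)} = 0 := by
      exact MeasureTheory.ae_iff.mp hae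
    have := measure_mono_null hsub hnull
    rw [Real.volume_Ico] at this
    exact absurd this (by simp [ENNReal.ofReal_eq_zero, not_le]; linarith)
  · have hp0 : p ≠ 0 := (zero_lt_one.trans hp).ne'
    have hq1 : 1 < p.toReal := by
      have := ENNReal.toReal_strict_mono hptop hp
      simpa using this
    set q := p.toReal with hqdef
    have hq0 : (0:ℝ) < q := by linarith
    rw [eLpNorm_eq_lintegral_rpow_enorm_toReal hp0 hptop,
      eLpNorm_eq_lintegral_rpow_enorm_toReal hp0 hptop]
    simp only [enorm_eq_nnnorm]
    apply ENNReal.rpow_le_rpow _ (by positivity)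
    rw [lint_eq hordt hq0, lint_eq hord0 hq0]
    have hterm : ∀ (s : ℝ), (∀ i < N, x s i < x s (i+1)) → ∀ k ∈ Finset.range N,
        (1 / ((N:ℝ) * (x s (k+1) - x s k))) ^ q * (x s (k+1) - x s k)
          = (N:ℝ) ^ (-q) * (x s (k+1) - x s k) ^ (1-q) := by
      intro s hord k hk
      have hkN := Finset.mem_range.mp hk
      have hd : 0 < x s (k+1) - x s k := by linarith [hord k hkN]
      have e1 : (1 / ((N:ℝ) * (x s (k+1) - x s k))) ^ q
          = (N:ℝ)^(-q) * (x s (k+1) - x s k)^(-q) := by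
        rw [one_div, Real.inv_rpow (by positivity), ← Real.rpow_neg (by positivity),
          Real.mul_rpow hNp.le hd.le]
      have e2 : (x s (k+1) - x s k) ^ (-q) * (x s (k+1) - x s k)
          = (x s (k+1) - x s k) ^ (1-q) := by
        nth_rewrite 2 [← Real.rpow_one (x s (k+1) - x s k)]
        rw [← Real.rpow_add hd, show -q + 1 = 1 - q by ring]
      rw [e1, mul_assoc, e2]
    rw [Finset.sum_congr rfl (fun k hk => congrArg ENNReal.ofReal (hterm t hordt k hk)),
      Finset.sum_congr rfl (fun k hk => congrArg ENNReal.ofReal (hterm 0 hord0 k hk))]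
    have hnn : ∀ (s : ℝ), (∀ i < N, x s i < x s (i+1)) → ∀ k ∈ Finset.range N,
        (0:ℝ) ≤ (N:ℝ) ^ (-q) * (x s (k+1) - x s k) ^ (1-q) := by
      intro s hord k hk
      have hd : 0 < x s (k+1) - x s k := by linarith [hord k (Finset.mem_range.mp hk)]
      exact mul_nonneg (Real.rpow_nonneg hNp.le _) (Real.rpow_nonneg hd.le _)
    rw [← ENNReal.ofReal_sum_of_nonneg (hnn t hordt),
      ← ENNReal.ofReal_sum_of_nonneg (hnn 0 hord0)]
    apply ENNReal.ofReal_le_ofReal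
    rw [← Finset.mul_sum, ← Finset.mul_sum]
    exact mul_le_mul_of_nonneg_left (key1 hε hN hx hq1 ht) (Real.rpow_nonneg hNp.le _)
end

section
/- Let ε > 0, let N ≥ 1 be an integer, and let x be a strictly ordered particle solution on [0,∞). Then for every t ≥ 0 the entropy identity holds: ∫_ℝ ρ^N(x,t)·log ρ^N(x,t) dx − ∫₀ᵗ ∫_ℝ ρ^N(x,τ)·(1/ε²)·( W_ε ∗ ρ^N(x,τ) − ρ^N(x,τ) ) dx dτ = ∫_ℝ ρ^N(x,0)·log ρ^N(x,0) dx, where the integrand ρ·log ρ is taken to vanish where ρ^N = 0. Moreover, for every t ≥ 0, ∫_ℝ ρ^N(x,t)·log ρ^N(x,t) dx ≤ ∫_ℝ ρ^N(x,0)·log ρ^N(x,0) dx. -/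
open MeasureTheory Real Set
open scoped ENNReal

noncomputable def Gf (ε s : ℝ) : ℝ := Real.sign s * ((1 - Real.exp (-|s| / ε)) / 2)

/-- antiderivative of Gf -/
noncomputable def Hf (ε s : ℝ) : ℝ := |s| / 2 - ε / 2 + ε ^ 2 * Morse ε s

lemma morse_even (ε s : ℝ) : Morse ε (-s) = Morse ε s := by simp [Morse]

lemma morse_cont (ε : ℝ) : Continuous (Morse ε) := by
  unfold Morse; fun_prop

lemma hf_even (ε s : ℝ) : Hf ε (-s) = Hf ε s := by simp [Hf, morse_even]

lemma gf_eq_pos {ε s : ℝ} (hs : 0 ≤ s) : Gf ε s = (1 - Real.exp (-s / ε)) / 2 := by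
  rcases eq_or_lt_of_le hs with h | h
  · simp [Gf, ← h]
  · rw [Gf, Real.sign_of_pos h, abs_of_pos h, one_mul]

lemma gf_eq_neg {ε s : ℝ} (hs : s ≤ 0) : Gf ε s = -((1 - Real.exp (s / ε)) / 2) := by
  rcases eq_or_lt_of_le hs with h | h
  · simp [Gf, h]
  · rw [Gf, Real.sign_of_neg h, abs_of_neg h]
    rw [neg_one_mul, neg_neg]

lemma hasDerivAt_nicePos (ε : ℝ) (hε : 0 < ε) (s : ℝ) :
    HasDerivAt (fun u : ℝ => (1 - Real.exp (-u / ε)) / 2)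
      ((1 / (2 * ε)) * Real.exp (-s / ε)) s := by
  have h1 : HasDerivAt (fun u : ℝ => -u / ε) (-1 / ε) s := by
    simpa using ((hasDerivAt_id s).neg.div_const ε)
  have h2 := h1.exp
  have h3 := ((hasDerivAt_const s (1 : ℝ)).sub h2).div_const 2
  refine h3.congr_deriv ?_
  field_simp
  ring

lemma hasDerivAt_niceNeg (ε : ℝ) (hε : 0 < ε) (s : ℝ) :
    HasDerivAt (fun u : ℝ => -((1 - Real.exp (u / ε)) / 2))
      ((1 / (2 * ε)) * Real.exp (s / ε)) s := by
  have h1 : HasDerivAt (fun u : ℝ => u / ε) (1 / ε) s := by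
    simpa using ((hasDerivAt_id s).div_const ε)
  have h2 := h1.exp
  have h3 := (((hasDerivAt_const s (1 : ℝ)).sub h2).div_const 2).neg
  refine h3.congr_deriv ?_
  field_simp
  ring

lemma hasDerivAt_Gf (ε : ℝ) (hε : 0 < ε) (s : ℝ) :
    HasDerivAt (Gf ε) (Morse ε s) s := by
  rcases lt_trichotomy s 0 with h | h | h
  · have hM : Morse ε s = (1 / (2 * ε)) * Real.exp (s / ε) := by
      rw [Morse, abs_of_neg h, neg_neg]
    rw [hM]
    refine (hasDerivAt_niceNeg ε hε s).congr_of_eventuallyEq ?_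
    filter_upwards [Iio_mem_nhds h] with y hy
    exact gf_eq_neg (le_of_lt hy)
  · subst h
    have hIci : HasDerivWithinAt (Gf ε) (Morse ε 0) (Ici 0) 0 := by
      have := (hasDerivAt_nicePos ε hε 0).hasDerivWithinAt (s := Ici 0)
      have heq : Morse ε 0 = (1 / (2 * ε)) * Real.exp (-(0:ℝ) / ε) := by simp [Morse]
      rw [heq]
      exact this.congr (fun y hy => gf_eq_pos hy) (gf_eq_pos le_rfl)
    have hIic : HasDerivWithinAt (Gf ε) (Morse ε 0) (Iic 0) 0 := by
      have := (hasDerivAt_niceNeg ε hε 0).hasDerivWithinAt (s := Iic 0)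
      have heq : Morse ε 0 = (1 / (2 * ε)) * Real.exp ((0:ℝ) / ε) := by simp [Morse]
      rw [heq]
      exact this.congr (fun y hy => gf_eq_neg hy) (gf_eq_neg le_rfl)
    have := hIic.union hIci
    rwa [Iic_union_Ici, hasDerivWithinAt_univ] at this
  · have hM : Morse ε s = (1 / (2 * ε)) * Real.exp (-s / ε) := by
      rw [Morse, abs_of_pos h]
    rw [hM]
    refine (hasDerivAt_nicePos ε hε s).congr_of_eventuallyEq ?_
    filter_upwards [Ioi_mem_nhds h] with y hy
    exact gf_eq_pos (le_of_lt hy)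

lemma hf_eq_pos {ε s : ℝ} (hε : 0 < ε) (hs : 0 ≤ s) :
    Hf ε s = s / 2 - ε / 2 + (ε / 2) * Real.exp (-s / ε) := by
  rw [Hf, Morse, abs_of_nonneg hs]
  field_simp

lemma hf_eq_neg {ε s : ℝ} (hε : 0 < ε) (hs : s ≤ 0) :
    Hf ε s = -s / 2 - ε / 2 + (ε / 2) * Real.exp (s / ε) := by
  rw [Hf, Morse, abs_of_nonpos hs, neg_neg]
  field_simp

lemma hasDerivAt_HnicePos (ε : ℝ) (hε : 0 < ε) (s : ℝ) :
    HasDerivAt (fun u : ℝ => u / 2 - ε / 2 + (ε / 2) * Real.exp (-u / ε))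
      ((1 - Real.exp (-s / ε)) / 2) s := by
  have h1 : HasDerivAt (fun u : ℝ => -u / ε) (-1 / ε) s := by
    simpa using ((hasDerivAt_id s).neg.div_const ε)
  have h2 := (h1.exp.const_mul (ε / 2))
  have h3 := (((hasDerivAt_id s).div_const 2).sub (hasDerivAt_const s (ε / 2))).add h2
  refine h3.congr_deriv ?_
  field_simp
  ring

lemma hasDerivAt_HniceNeg (ε : ℝ) (hε : 0 < ε) (s : ℝ) :
    HasDerivAt (fun u : ℝ => -u / 2 - ε / 2 + (ε / 2) * Real.exp (u / ε))
      (-((1 - Real.exp (s / ε)) / 2)) s := by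
  have h1 : HasDerivAt (fun u : ℝ => u / ε) (1 / ε) s := by
    simpa using ((hasDerivAt_id s).div_const ε)
  have h2 := (h1.exp.const_mul (ε / 2))
  have h3 := (((hasDerivAt_id s).neg.div_const 2).sub (hasDerivAt_const s (ε / 2))).add h2
  refine h3.congr_deriv ?_
  field_simp
  ring

lemma hasDerivAt_Hf (ε : ℝ) (hε : 0 < ε) (s : ℝ) :
    HasDerivAt (Hf ε) (Gf ε s) s := by
  rcases lt_trichotomy s 0 with h | h | h
  · rw [gf_eq_neg h.le]
    refine (hasDerivAt_HniceNeg ε hε s).congr_of_eventuallyEq ?_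
    filter_upwards [Iio_mem_nhds h] with y hy
    exact hf_eq_neg hε (le_of_lt hy)
  · subst h
    have hIci : HasDerivWithinAt (Hf ε) (Gf ε 0) (Ici 0) 0 := by
      have := (hasDerivAt_HnicePos ε hε 0).hasDerivWithinAt (s := Ici 0)
      have heq : Gf ε 0 = (1 - Real.exp (-(0:ℝ) / ε)) / 2 := by simp [Gf]
      rw [heq]
      exact this.congr (fun y hy => hf_eq_pos hε hy) (hf_eq_pos hε le_rfl)
    have hIic : HasDerivWithinAt (Hf ε) (Gf ε 0) (Iic 0) 0 := by
      have := (hasDerivAt_HniceNeg ε hε 0).hasDerivWithinAt (s := Iic 0)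
      have heq : Gf ε 0 = -((1 - Real.exp ((0:ℝ) / ε)) / 2) := by simp [Gf]
      rw [heq]
      exact this.congr (fun y hy => hf_eq_neg hε hy) (hf_eq_neg hε le_rfl)
    have := hIic.union hIci
    rwa [Iic_union_Ici, hasDerivWithinAt_univ] at this
  · rw [gf_eq_pos h.le]
    refine (hasDerivAt_HnicePos ε hε s).congr_of_eventuallyEq ?_
    filter_upwards [Ioi_mem_nhds h] with y hy
    exact hf_eq_pos hε (le_of_lt hy)

lemma gf_abs_le (ε : ℝ) (hε : 0 < ε) (s : ℝ) : |Gf ε s| ≤ 1 / 2 := by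
  rw [Gf, abs_mul]
  have h1 : |Real.sign s| ≤ 1 := by
    rcases Real.sign_apply_eq s with h | h | h <;> rw [h] <;> norm_num
  have h2 : |(1 - Real.exp (-|s| / ε)) / 2| ≤ 1 / 2 := by
    rw [abs_div, abs_two]
    have : |1 - Real.exp (-|s| / ε)| ≤ 1 := by
      have e1 := Real.exp_pos (-|s| / ε)
      have e2 := Real.exp_le_one_iff.mpr
          (div_nonpos_of_nonpos_of_nonneg (neg_nonpos.mpr (abs_nonneg s)) hε.le)
      rw [abs_le]
      constructor <;> nlinarith
    linarith
  calc |Real.sign s| * |(1 - Real.exp (-|s| / ε)) / 2| ≤ 1 * (1/2) := by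
        exact mul_le_mul h1 h2 (abs_nonneg _) zero_le_one
    _ = 1 / 2 := by ring

lemma hf_lip (ε : ℝ) (hε : 0 < ε) (p q : ℝ) : |Hf ε p - Hf ε q| ≤ |p - q| / 2 := by
  have := Convex.norm_image_sub_le_of_norm_hasDerivWithin_le
    (f := Hf ε) (f' := Gf ε) (s := Set.univ) (C := 1/2)
    (fun u _ => (hasDerivAt_Hf ε hε u).hasDerivWithinAt)
    (fun u _ => by simpa using gf_abs_le ε hε u) convex_univ (Set.mem_univ q) (Set.mem_univ p)
  simpa [Real.norm_eq_abs, mul_comm, div_eq_mul_inv, mul_comm] using this.trans (by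
    rw [Real.norm_eq_abs]; ring_nf; exact le_rfl)

lemma gf_cont (ε : ℝ) (hε : 0 < ε) : Continuous (Gf ε) :=
  continuous_iff_continuousAt.mpr fun s => (hasDerivAt_Gf ε hε s).continuousAt

lemma hf_zero (ε : ℝ) (hε : 0 < ε) : Hf ε 0 = 0 := by
  rw [Hf, Morse]
  field_simp
  simp

/-! ### FTC computations -/

lemma intKernel (ε : ℝ) (hε : 0 < ε) (y a b : ℝ) :
    ∫ z in a..b, Morse ε (y - z) = Gf ε (y - a) - Gf ε (y - b) := by
  have h : ∀ z ∈ Set.uIcc a b, HasDerivAt (fun z => -Gf ε (y - z)) (Morse ε (y - z)) z := by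
    intro z _
    have hin : HasDerivAt (fun z : ℝ => y - z) (-1) z := by
      simpa using (hasDerivAt_id z).const_sub y
    have := ((hasDerivAt_Gf ε hε (y - z)).comp z hin).neg
    simp at this; exact this
  have hint : IntervalIntegrable (fun z => Morse ε (y - z)) volume a b :=
    ((morse_cont ε).comp (continuous_const.sub continuous_id)).intervalIntegrable a b
  rw [intervalIntegral.integral_eq_sub_of_hasDerivAt h hint]
  ring

lemma intG (ε : ℝ) (hε : 0 < ε) (a b c : ℝ) :
    ∫ z in a..b, Gf ε (z - c) = Hf ε (b - c) - Hf ε (a - c) := by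
  have h : ∀ z ∈ Set.uIcc a b, HasDerivAt (fun z => Hf ε (z - c)) (Gf ε (z - c)) z := by
    intro z _
    have hin : HasDerivAt (fun z : ℝ => z - c) 1 z := by
      simpa using (hasDerivAt_id z).sub_const c
    have := (hasDerivAt_Hf ε hε (z - c)).comp z hin
    simp at this; exact this
  have hint : IntervalIntegrable (fun z => Gf ε (z - c)) volume a b :=
    ((gf_cont ε hε).comp (continuous_id.sub continuous_const)).intervalIntegrable a b
  rw [intervalIntegral.integral_eq_sub_of_hasDerivAt h hint]

/-! ### Slice density -/

section Slice

variable {N : ℕ} {ξ : ℕ → ℝ}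

/-- slice density -/
noncomputable def sdens (N : ℕ) (ξ : ℕ → ℝ) (y : ℝ) : ℝ :=
  ∑ k ∈ Finset.range N,
    Set.indicator (Set.Ico (ξ k) (ξ (k + 1))) (fun _ => 1 / ((N : ℝ) * (ξ (k + 1) - ξ k))) y

lemma sdens_mono (hξ : ∀ i < N, ξ i < ξ (i + 1)) :
    ∀ i j, i < j → j ≤ N → ξ i < ξ j := by
  intro i j hij hjN
  induction j with
  | zero => omega
  | succ n ih =>
    rcases Nat.lt_succ_iff_lt_or_eq.mp hij with h | h
    · exact lt_trans (ih h (by omega)) (hξ n (by omega))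
    · subst h; exact hξ i (by omega)

lemma sdens_notmem (hξ : ∀ i < N, ξ i < ξ (i + 1)) {j : ℕ} (hj : j < N) {y : ℝ}
    (hy : y ∈ Set.Ico (ξ j) (ξ (j + 1))) :
    ∀ k < N, k ≠ j → y ∉ Set.Ico (ξ k) (ξ (k + 1)) := by
  intro k hk hkj hmem
  rcases lt_or_gt_of_ne hkj with h | h
  · -- k < j : ξ (k+1) ≤ ξ j ≤ y
    have h1 : ξ (k + 1) ≤ ξ j := by
      rcases eq_or_lt_of_le (Nat.succ_le_of_lt h) with h' | h'
      · exact le_of_eq (congrArg ξ h')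
      · exact (sdens_mono hξ (k+1) j h' (by omega)).le
    exact absurd hmem.2 (not_lt.mpr (le_trans h1 hy.1))
  · -- j < k : y < ξ (j+1) ≤ ξ k
    have h1 : ξ (j + 1) ≤ ξ k := by
      rcases eq_or_lt_of_le (Nat.succ_le_of_lt h) with h' | h'
      · exact le_of_eq (congrArg ξ h')
      · exact (sdens_mono hξ (j+1) k h' (by omega)).le
    exact absurd hy.2 (not_lt.mpr (le_trans h1 hmem.1))

lemma sdens_pointwise (hξ : ∀ i < N, ξ i < ξ (i + 1)) (φ : ℝ → ℝ → ℝ)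
    (hφ0 : ∀ y, φ 0 y = 0) (y : ℝ) :
    φ (sdens N ξ y) y = ∑ k ∈ Finset.range N,
      Set.indicator (Set.Ico (ξ k) (ξ (k + 1)))
        (fun y => φ (1 / ((N : ℝ) * (ξ (k + 1) - ξ k))) y) y := by
  by_cases h : ∃ j, j < N ∧ y ∈ Set.Ico (ξ j) (ξ (j + 1))
  · obtain ⟨j, hj, hyj⟩ := h
    have hval : sdens N ξ y = 1 / ((N : ℝ) * (ξ (j + 1) - ξ j)) := by
      rw [sdens, Finset.sum_eq_single_of_mem j (Finset.mem_range.mpr hj)]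
      · exact Set.indicator_of_mem hyj _
      · intro k hk hkj
        exact Set.indicator_of_notMem
          (sdens_notmem hξ hj hyj k (Finset.mem_range.mp hk) hkj) _
    rw [hval, Finset.sum_eq_single_of_mem j (Finset.mem_range.mpr hj)]
    · exact (Set.indicator_of_mem hyj _).symm
    · intro k hk hkj
      exact Set.indicator_of_notMem
        (sdens_notmem hξ hj hyj k (Finset.mem_range.mp hk) hkj) _
  · push_neg at h
    have hval : sdens N ξ y = 0 := by
      rw [sdens]
      apply Finset.sum_eq_zero
      intro k hk
      exact Set.indicator_of_notMem (h k (Finset.mem_range.mp hk)) _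
    rw [hval, hφ0]
    symm
    apply Finset.sum_eq_zero
    intro k hk
    exact Set.indicator_of_notMem (h k (Finset.mem_range.mp hk)) _

lemma sdens_integral (hξ : ∀ i < N, ξ i < ξ (i + 1)) (ψ : ℕ → ℝ → ℝ)
    (hψ : ∀ k, Continuous (ψ k)) :
    ∫ y, ∑ k ∈ Finset.range N,
        Set.indicator (Set.Ico (ξ k) (ξ (k + 1))) (ψ k) y
      = ∑ k ∈ Finset.range N, ∫ y in (ξ k)..(ξ (k + 1)), ψ k y := by
  have hint : ∀ k ∈ Finset.range N,
      Integrable (Set.indicator (Set.Ico (ξ k) (ξ (k + 1))) (ψ k)) volume := by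
    intro k _
    exact (((hψ k).integrableOn_Icc).mono_set Set.Ico_subset_Icc_self).integrable_indicator
      measurableSet_Ico
  rw [integral_finset_sum _ hint]
  apply Finset.sum_congr rfl
  intro k hk
  rw [integral_indicator measurableSet_Ico, integral_Ico_eq_integral_Ioo,
    ← integral_Ioc_eq_integral_Ioo,
    ← intervalIntegral.integral_of_le (hξ k (Finset.mem_range.mp hk)).le]

lemma ent_val (hN : 1 ≤ N) (hξ : ∀ i < N, ξ i < ξ (i + 1)) :
    ∫ y, sdens N ξ y * Real.log (sdens N ξ y)
      = -(1 / (N : ℝ)) * ∑ k ∈ Finset.range N, Real.log ((N : ℝ) * (ξ (k + 1) - ξ k)) := by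
  have hNne : (N : ℝ) ≠ 0 := Nat.cast_ne_zero.mpr (by omega)
  have h1 : (fun y => sdens N ξ y * Real.log (sdens N ξ y))
      = fun y => ∑ k ∈ Finset.range N,
          Set.indicator (Set.Ico (ξ k) (ξ (k + 1)))
            (fun _ => (1 / ((N : ℝ) * (ξ (k + 1) - ξ k))) *
              Real.log (1 / ((N : ℝ) * (ξ (k + 1) - ξ k)))) y :=
    funext fun y => sdens_pointwise hξ (fun c _ => c * Real.log c) (by simp) y
  rw [h1, sdens_integral hξ _ (fun k => continuous_const), Finset.mul_sum]
  apply Finset.sum_congr rfl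
  intro k hk
  have hd : 0 < ξ (k + 1) - ξ k := sub_pos.mpr (hξ k (Finset.mem_range.mp hk))
  rw [intervalIntegral.integral_const, smul_eq_mul, one_div, Real.log_inv]
  field_simp

lemma cont_morse_shift (ε y : ℝ) : Continuous fun z : ℝ => Morse ε (y - z) :=
  (morse_cont ε).comp (continuous_const.sub continuous_id)

lemma cont_gf_shift (ε : ℝ) (hε : 0 < ε) (c : ℝ) : Continuous fun z : ℝ => Gf ε (z - c) :=
  (gf_cont ε hε).comp (continuous_id.sub continuous_const)

lemma conv_val (ε : ℝ) (hε : 0 < ε) (hξ : ∀ i < N, ξ i < ξ (i + 1)) (y : ℝ) :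
    conv (Morse ε) (sdens N ξ) y
      = ∑ j ∈ Finset.range N, (Gf ε (y - ξ j) - Gf ε (y - ξ (j + 1))) *
          (1 / ((N : ℝ) * (ξ (j + 1) - ξ j))) := by
  have h1 : (fun z => Morse ε (y - z) * sdens N ξ z)
      = fun z => ∑ j ∈ Finset.range N,
          Set.indicator (Set.Ico (ξ j) (ξ (j + 1)))
            (fun z => Morse ε (y - z) * (1 / ((N : ℝ) * (ξ (j + 1) - ξ j)))) z := by
    funext z
    rw [sdens, Finset.mul_sum]
    apply Finset.sum_congr rfl
    intro j _
    by_cases h : z ∈ Set.Ico (ξ j) (ξ (j + 1)) <;> simp [h]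
  rw [conv, h1, sdens_integral hξ (fun j z => Morse ε (y - z) * (1 / ((N : ℝ) * (ξ (j + 1) - ξ j)))) (fun j => (cont_morse_shift ε y).mul continuous_const)]
  apply Finset.sum_congr rfl
  intro j _
  rw [intervalIntegral.integral_mul_const, intKernel ε hε]

lemma conv_F_cont (ε : ℝ) (hε : 0 < ε) :
    Continuous (fun y => ∑ j ∈ Finset.range N, (Gf ε (y - ξ j) - Gf ε (y - ξ (j + 1))) *
          (1 / ((N : ℝ) * (ξ (j + 1) - ξ j)))) := by
  apply continuous_finset_sum
  intro j _
  exact (((cont_gf_shift ε hε (ξ j)).sub (cont_gf_shift ε hε (ξ (j + 1)))).mul continuous_const)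

lemma diss_val (ε : ℝ) (hε : 0 < ε) (hN : 1 ≤ N) (hξ : ∀ i < N, ξ i < ξ (i + 1)) :
    ∫ y, sdens N ξ y * ((1 / ε ^ 2) * (conv (Morse ε) (sdens N ξ) y - sdens N ξ y))
      = ∑ k ∈ Finset.range N, (1 / ((N : ℝ) * (ξ (k + 1) - ξ k))) * ((1 / ε ^ 2) *
          ((∑ j ∈ Finset.range N,
            ((Hf ε (ξ (k + 1) - ξ j) - Hf ε (ξ k - ξ j)) -
              (Hf ε (ξ (k + 1) - ξ (j + 1)) - Hf ε (ξ k - ξ (j + 1)))) *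
            (1 / ((N : ℝ) * (ξ (j + 1) - ξ j)))) -
            (ξ (k + 1) - ξ k) * (1 / ((N : ℝ) * (ξ (k + 1) - ξ k))))) := by
  set F : ℝ → ℝ := fun y => ∑ j ∈ Finset.range N,
    (Gf ε (y - ξ j) - Gf ε (y - ξ (j + 1))) * (1 / ((N : ℝ) * (ξ (j + 1) - ξ j))) with hF
  have hFc : Continuous F := conv_F_cont ε hε
  have hconv : ∀ y, conv (Morse ε) (sdens N ξ) y = F y := fun y => by
    rw [conv_val ε hε hξ y]
  have h1 : (fun y => sdens N ξ y * ((1 / ε ^ 2) * (conv (Morse ε) (sdens N ξ) y - sdens N ξ y)))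
      = fun y => ∑ k ∈ Finset.range N,
          Set.indicator (Set.Ico (ξ k) (ξ (k + 1)))
            (fun y => (1 / ((N : ℝ) * (ξ (k + 1) - ξ k))) *
              ((1 / ε ^ 2) * (F y - 1 / ((N : ℝ) * (ξ (k + 1) - ξ k))))) y := by
    funext y
    rw [hconv y]
    exact sdens_pointwise hξ (fun c y => c * ((1 / ε ^ 2) * (F y - c))) (by simp) y
  rw [h1, sdens_integral hξ (fun k y => (1 / ((N : ℝ) * (ξ (k + 1) - ξ k))) *
                ((1 / ε ^ 2) * (F y - 1 / ((N : ℝ) * (ξ (k + 1) - ξ k)))))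
    (fun k => continuous_const.mul (continuous_const.mul (hFc.sub continuous_const)))]
  apply Finset.sum_congr rfl
  intro k hk
  have hd := hξ k (Finset.mem_range.mp hk)
  have hFi : IntervalIntegrable F volume (ξ k) (ξ (k + 1)) := hFc.intervalIntegrable _ _
  have hintF : ∫ y in (ξ k)..(ξ (k + 1)), F y
      = ∑ j ∈ Finset.range N,
          ((Hf ε (ξ (k + 1) - ξ j) - Hf ε (ξ k - ξ j)) -
            (Hf ε (ξ (k + 1) - ξ (j + 1)) - Hf ε (ξ k - ξ (j + 1)))) *
          (1 / ((N : ℝ) * (ξ (j + 1) - ξ j))) := by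
    rw [hF, intervalIntegral.integral_finset_sum]
    · apply Finset.sum_congr rfl
      intro j _
      rw [intervalIntegral.integral_mul_const, intervalIntegral.integral_sub
        ((cont_gf_shift ε hε (ξ j)).intervalIntegrable _ _)
        ((cont_gf_shift ε hε (ξ (j + 1))).intervalIntegrable _ _)]
      rw [intG ε hε (ξ k) (ξ (k + 1)) (ξ j), intG ε hε (ξ k) (ξ (k + 1)) (ξ (j + 1))]
    · intro j _
      exact (((cont_gf_shift ε hε (ξ j)).sub (cont_gf_shift ε hε (ξ (j + 1)))).mul
        continuous_const).intervalIntegrable _ _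
  rw [intervalIntegral.integral_const_mul, intervalIntegral.integral_const_mul,
    intervalIntegral.integral_sub hFi intervalIntegrable_const,
    intervalIntegral.integral_const, hintF, smul_eq_mul]


lemma pair_off {ε : ℝ} (hε : 0 < ε) {a b c d : ℝ} (hab : a ≤ b) (hcd : c ≤ d)
    (h : b ≤ c ∨ d ≤ a) :
    (Hf ε (b - c) - Hf ε (a - c)) - (Hf ε (b - d) - Hf ε (a - d))
      = -(ε ^ 2 * ((Morse ε (d - b) - Morse ε (c - b)) - (Morse ε (d - a) - Morse ε (c - a)))) := by
  have hεne : ε ≠ 0 := ne_of_gt hε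
  rcases h with h | h
  · have h1 : b - c ≤ 0 := by linarith
    have h2 : a - c ≤ 0 := by linarith
    have h3 : b - d ≤ 0 := by linarith
    have h4 : a - d ≤ 0 := by linarith
    have h5 : 0 ≤ d - b := by linarith
    have h6 : 0 ≤ c - b := by linarith
    have h7 : 0 ≤ d - a := by linarith
    have h8 : 0 ≤ c - a := by linarith
    simp only [Hf, Morse, abs_of_nonpos h1, abs_of_nonpos h2, abs_of_nonpos h3,
      abs_of_nonpos h4, abs_of_nonneg h5, abs_of_nonneg h6, abs_of_nonneg h7,
      abs_of_nonneg h8]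
    field_simp
    ring_nf
  · have h1 : 0 ≤ b - c := by linarith
    have h2 : 0 ≤ a - c := by linarith
    have h3 : 0 ≤ b - d := by linarith
    have h4 : 0 ≤ a - d := by linarith
    have h5 : d - b ≤ 0 := by linarith
    have h6 : c - b ≤ 0 := by linarith
    have h7 : d - a ≤ 0 := by linarith
    have h8 : c - a ≤ 0 := by linarith
    simp only [Hf, Morse, abs_of_nonneg h1, abs_of_nonneg h2, abs_of_nonneg h3,
      abs_of_nonneg h4, abs_of_nonpos h5, abs_of_nonpos h6, abs_of_nonpos h7,
      abs_of_nonpos h8]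
    field_simp
    ring_nf

lemma pair_diag {ε : ℝ} (hε : 0 < ε) {a b : ℝ} (hab : a ≤ b) :
    (Hf ε (b - a) - Hf ε (a - a)) - (Hf ε (b - b) - Hf ε (a - b))
      = (b - a) -
        ε ^ 2 * ((Morse ε (b - b) - Morse ε (a - b)) - (Morse ε (b - a) - Morse ε (a - a))) := by
  have hεne : ε ≠ 0 := ne_of_gt hε
  have h1 : 0 ≤ b - a := by linarith
  have h2 : a - b ≤ 0 := by linarith
  simp only [Hf, Morse, sub_self, abs_zero, abs_of_nonneg h1, abs_of_nonpos h2, neg_zero,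
    zero_div, Real.exp_zero]
  field_simp
  ring_nf

lemma Aoff_nonneg {ε : ℝ} (hε : 0 < ε) {a b c d : ℝ} (hab : a ≤ b) (hcd : c ≤ d)
    (h : b ≤ c ∨ d ≤ a) :
    0 ≤ (Hf ε (b - c) - Hf ε (a - c)) - (Hf ε (b - d) - Hf ε (a - d)) := by
  have hexp : ∀ p q : ℝ, Real.exp ((p - q) / ε) = Real.exp (p / ε) * Real.exp (-(q / ε)) := by
    intro p q
    rw [← Real.exp_add]
    congr 1
    ring
  rcases h with h | h
  · have h1 : b - c ≤ 0 := by linarith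
    have h2 : a - c ≤ 0 := by linarith
    have h3 : b - d ≤ 0 := by linarith
    have h4 : a - d ≤ 0 := by linarith
    rw [hf_eq_neg hε h1, hf_eq_neg hε h2, hf_eq_neg hε h3, hf_eq_neg hε h4]
    have key : (-(b - c) / 2 - ε / 2 + ε / 2 * Real.exp ((b - c) / ε)
        - (-(a - c) / 2 - ε / 2 + ε / 2 * Real.exp ((a - c) / ε)))
        - (-(b - d) / 2 - ε / 2 + ε / 2 * Real.exp ((b - d) / ε)
        - (-(a - d) / 2 - ε / 2 + ε / 2 * Real.exp ((a - d) / ε)))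
        = (ε / 2) * ((Real.exp (b / ε) - Real.exp (a / ε)) *
            (Real.exp (-(c / ε)) - Real.exp (-(d / ε)))) := by
      rw [hexp, hexp, hexp, hexp]
      ring
    rw [key]
    apply mul_nonneg (by positivity)
    apply mul_nonneg
    · simp only [sub_nonneg, Real.exp_le_exp]
      gcongr
    · simp only [sub_nonneg, Real.exp_le_exp, neg_le_neg_iff]
      gcongr
  · have h1 : 0 ≤ b - c := by linarith
    have h2 : 0 ≤ a - c := by linarith
    have h3 : 0 ≤ b - d := by linarith
    have h4 : 0 ≤ a - d := by linarith
    rw [hf_eq_pos hε h1, hf_eq_pos hε h2, hf_eq_pos hε h3, hf_eq_pos hε h4]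
    have hexp' : ∀ p q : ℝ, Real.exp (-(p - q) / ε) = Real.exp (-(p / ε)) * Real.exp (q / ε) := by
      intro p q
      rw [← Real.exp_add]
      congr 1
      ring
    have key : ((b - c) / 2 - ε / 2 + ε / 2 * Real.exp (-(b - c) / ε)
        - ((a - c) / 2 - ε / 2 + ε / 2 * Real.exp (-(a - c) / ε)))
        - ((b - d) / 2 - ε / 2 + ε / 2 * Real.exp (-(b - d) / ε)
        - ((a - d) / 2 - ε / 2 + ε / 2 * Real.exp (-(a - d) / ε)))
        = (ε / 2) * ((Real.exp (-(a / ε)) - Real.exp (-(b / ε))) *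
            (Real.exp (d / ε) - Real.exp (c / ε))) := by
      rw [hexp', hexp', hexp', hexp']
      ring
    rw [key]
    apply mul_nonneg (by positivity)
    apply mul_nonneg
    · simp only [sub_nonneg, Real.exp_le_exp, neg_le_neg_iff]
      gcongr
    · simp only [sub_nonneg, Real.exp_le_exp]
      gcongr

lemma dform_eq (ε : ℝ) (hε : 0 < ε) (hN : 1 ≤ N) (hξ : ∀ i < N, ξ i < ξ (i + 1)) :
    -(1 / (N : ℝ)) * ∑ k ∈ Finset.range N,
        ((N : ℝ) * (particleRHS ε N ξ (k + 1) - particleRHS ε N ξ k)) /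
          ((N : ℝ) * (ξ (k + 1) - ξ k))
      = ∑ k ∈ Finset.range N, (1 / ((N : ℝ) * (ξ (k + 1) - ξ k))) * ((1 / ε ^ 2) *
          ((∑ j ∈ Finset.range N,
            ((Hf ε (ξ (k + 1) - ξ j) - Hf ε (ξ k - ξ j)) -
              (Hf ε (ξ (k + 1) - ξ (j + 1)) - Hf ε (ξ k - ξ (j + 1)))) *
            (1 / ((N : ℝ) * (ξ (j + 1) - ξ j)))) -
            (ξ (k + 1) - ξ k) * (1 / ((N : ℝ) * (ξ (k + 1) - ξ k))))) := by
  have hNne : (N : ℝ) ≠ 0 := Nat.cast_ne_zero.mpr (by omega)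
  have hεne : ε ≠ 0 := ne_of_gt hε
  have hdne : ∀ k < N, ξ (k + 1) - ξ k ≠ 0 := fun k hk => ne_of_gt (sub_pos.mpr (hξ k hk))
  rw [Finset.mul_sum]
  apply Finset.sum_congr rfl
  intro k hk
  have hkN := Finset.mem_range.mp hk
  have hdk := hdne k hkN
  -- delta trick on the RHS
  have hdel : (ξ (k + 1) - ξ k) * (1 / ((N : ℝ) * (ξ (k + 1) - ξ k)))
      = ∑ j ∈ Finset.range N,
          (if j = k then (ξ (k + 1) - ξ k) else 0) * (1 / ((N : ℝ) * (ξ (j + 1) - ξ j))) := by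
    simp only [ite_mul, zero_mul]
    rw [Finset.sum_ite_eq' (Finset.range N) k
      (fun j => (ξ (k + 1) - ξ k) * (1 / ((N : ℝ) * (ξ (j + 1) - ξ j))))]
    simp [hk]
  rw [hdel, ← Finset.sum_sub_distrib, Finset.mul_sum, Finset.mul_sum]
  -- expand the LHS
  rw [particleRHS, particleRHS, ← mul_sub, ← Finset.sum_sub_distrib]
  have hcancel : ∀ S : ℝ, -(1 / (N : ℝ)) * (((N : ℝ) * ((1 / (N : ℝ)) * S)) /
      ((N : ℝ) * (ξ (k + 1) - ξ k))) = S * (-(1 / ((N : ℝ) * ((N : ℝ) * (ξ (k + 1) - ξ k))))) := by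
    intro S
    field_simp
  rw [hcancel, Finset.sum_mul]
  apply Finset.sum_congr rfl
  intro j hj
  have hjN := Finset.mem_range.mp hj
  have hdj := hdne j hjN
  rcases eq_or_ne j k with hjk | hjk
  · subst hjk
    rw [if_pos rfl]
    have P := pair_diag hε (a := ξ j) (b := ξ (j + 1)) (hξ j hjN).le
    have P' : (Hf ε (ξ (j + 1) - ξ j) - Hf ε (ξ j - ξ j)) -
        (Hf ε (ξ (j + 1) - ξ (j + 1)) - Hf ε (ξ j - ξ (j + 1)))
        = (ξ (j + 1) - ξ j) - ε ^ 2 * ((Morse ε (ξ (j + 1) - ξ (j + 1)) -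
            Morse ε (ξ j - ξ (j + 1))) - (Morse ε (ξ (j + 1) - ξ j) - Morse ε (ξ j - ξ j))) := P
    rw [P']
    field_simp
    ring
  · rw [if_neg hjk]
    have horder : ξ (k + 1) ≤ ξ j ∨ ξ (j + 1) ≤ ξ k := by
      rcases lt_or_gt_of_ne hjk with h | h
      · -- j < k
        right
        rcases eq_or_lt_of_le (Nat.succ_le_of_lt h) with h' | h'
        · exact le_of_eq (congrArg ξ h')
        · exact (sdens_mono hξ (j + 1) k h' (by omega)).le
      · -- k < j
        left
        rcases eq_or_lt_of_le (Nat.succ_le_of_lt h) with h' | h'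
        · exact le_of_eq (congrArg ξ h')
        · exact (sdens_mono hξ (k + 1) j h' (by omega)).le
    have P := pair_off hε (a := ξ k) (b := ξ (k + 1)) (c := ξ j) (d := ξ (j + 1))
      (hξ k hkN).le (hξ j hjN).le horder
    rw [P]
    field_simp
    ring

noncomputable def Aform (ε : ℝ) (ξ : ℕ → ℝ) (k j : ℕ) : ℝ :=
  (Hf ε (ξ (k + 1) - ξ j) - Hf ε (ξ k - ξ j)) -
    (Hf ε (ξ (k + 1) - ξ (j + 1)) - Hf ε (ξ k - ξ (j + 1)))

lemma hf_flip (ε p q : ℝ) : Hf ε (p - q) = Hf ε (q - p) := by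
  rw [show p - q = -(q - p) by ring, hf_even]

lemma Aform_symm (ε : ℝ) (ξ : ℕ → ℝ) (k j : ℕ) : Aform ε ξ k j = Aform ε ξ j k := by
  unfold Aform
  rw [hf_flip ε (ξ (k + 1)) (ξ j), hf_flip ε (ξ k) (ξ j),
    hf_flip ε (ξ (k + 1)) (ξ (j + 1)), hf_flip ε (ξ k) (ξ (j + 1))]
  ring

lemma Aform_nonneg {ε : ℝ} (hε : 0 < ε) {N : ℕ} {ξ : ℕ → ℝ}
    (hξ : ∀ i < N, ξ i < ξ (i + 1)) {k j : ℕ} (hk : k < N) (hj : j < N) (hjk : j ≠ k) :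
    0 ≤ Aform ε ξ k j := by
  have horder : ξ (k + 1) ≤ ξ j ∨ ξ (j + 1) ≤ ξ k := by
    rcases lt_or_gt_of_ne hjk with h | h
    · right
      rcases eq_or_lt_of_le (Nat.succ_le_of_lt h) with h' | h'
      · exact le_of_eq (congrArg ξ h')
      · exact (sdens_mono hξ (j + 1) k h' (by omega)).le
    · left
      rcases eq_or_lt_of_le (Nat.succ_le_of_lt h) with h' | h'
      · exact le_of_eq (congrArg ξ h')
      · exact (sdens_mono hξ (k + 1) j h' (by omega)).le
  exact Aoff_nonneg hε (hξ k hk).le (hξ j hj).le horder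

lemma hf_sub_le {ε : ℝ} (hε : 0 < ε) (p q : ℝ) : Hf ε p - Hf ε q ≤ |p - q| / 2 :=
  le_trans (le_abs_self _) (hf_lip ε hε p q)

lemma Aform_rowsum (ε : ℝ) (hε : 0 < ε) {N : ℕ} {ξ : ℕ → ℝ}
    (hξ : ∀ i < N, ξ i < ξ (i + 1)) {k : ℕ} (hk : k < N) :
    ∑ j ∈ Finset.range N, Aform ε ξ k j ≤ ξ (k + 1) - ξ k := by
  have htel := Finset.sum_range_sub'
    (f := fun j => Hf ε (ξ (k + 1) - ξ j) - Hf ε (ξ k - ξ j)) N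
  have heq : ∑ j ∈ Finset.range N, Aform ε ξ k j
      = (Hf ε (ξ (k + 1) - ξ 0) - Hf ε (ξ k - ξ 0)) -
        (Hf ε (ξ (k + 1) - ξ N) - Hf ε (ξ k - ξ N)) := htel
  rw [heq]
  have hd : 0 ≤ ξ (k + 1) - ξ k := (sub_pos.mpr (hξ k hk)).le
  have l1 := hf_sub_le hε (ξ (k + 1) - ξ 0) (ξ k - ξ 0)
  have l2 := hf_sub_le hε (ξ k - ξ N) (ξ (k + 1) - ξ N)
  rw [show ξ (k + 1) - ξ 0 - (ξ k - ξ 0) = ξ (k + 1) - ξ k by ring, abs_of_nonneg hd] at l1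
  rw [show ξ k - ξ N - (ξ (k + 1) - ξ N) = -(ξ (k + 1) - ξ k) by ring, abs_neg,
    abs_of_nonneg hd] at l2
  linarith

lemma quad_bound {N : ℕ} (A : ℕ → ℕ → ℝ) (R D : ℕ → ℝ)
    (hsym : ∀ k j, A k j = A j k)
    (hpos : ∀ k ∈ Finset.range N, ∀ j ∈ Finset.range N, j ≠ k → 0 ≤ A k j)
    (hrow : ∀ k ∈ Finset.range N, ∑ j ∈ Finset.range N, A k j ≤ D k) :
    ∑ k ∈ Finset.range N, ∑ j ∈ Finset.range N, A k j * (R k * R j)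
      ≤ ∑ k ∈ Finset.range N, D k * R k ^ 2 := by
  calc ∑ k ∈ Finset.range N, ∑ j ∈ Finset.range N, A k j * (R k * R j)
      ≤ ∑ k ∈ Finset.range N, ∑ j ∈ Finset.range N, A k j * ((R k ^ 2 + R j ^ 2) / 2) := by
        apply Finset.sum_le_sum
        intro k hk
        apply Finset.sum_le_sum
        intro j hj
        rcases eq_or_ne j k with rfl | h
        · exact le_of_eq (by ring)
        · have hA := hpos k hk j hj h
          nlinarith [sq_nonneg (R k - R j)]
    _ = ∑ k ∈ Finset.range N, ∑ j ∈ Finset.range N, A k j * R k ^ 2 := by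
        have h1 : ∀ k j : ℕ, A k j * ((R k ^ 2 + R j ^ 2) / 2)
            = A k j * R k ^ 2 / 2 + A k j * R j ^ 2 / 2 := fun _ _ => by ring
        simp_rw [h1, Finset.sum_add_distrib]
        have h2 : ∑ k ∈ Finset.range N, ∑ j ∈ Finset.range N, A k j * R j ^ 2 / 2
            = ∑ k ∈ Finset.range N, ∑ j ∈ Finset.range N, A k j * R k ^ 2 / 2 := by
          rw [Finset.sum_comm]
          exact Finset.sum_congr rfl fun j _ => Finset.sum_congr rfl fun k _ => by rw [hsym]
        rw [h2, ← Finset.sum_add_distrib]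
        apply Finset.sum_congr rfl
        intro k _
        rw [← Finset.sum_add_distrib]
        exact Finset.sum_congr rfl fun j _ => by ring
    _ = ∑ k ∈ Finset.range N, (∑ j ∈ Finset.range N, A k j) * R k ^ 2 := by
        exact Finset.sum_congr rfl fun k _ => (Finset.sum_mul _ _ _).symm
    _ ≤ ∑ k ∈ Finset.range N, D k * R k ^ 2 := by
        apply Finset.sum_le_sum
        intro k hk
        exact mul_le_mul_of_nonneg_right (hrow k hk) (sq_nonneg _)

lemma diss_nonpos (ε : ℝ) (hε : 0 < ε) {N : ℕ} {ξ : ℕ → ℝ} (hN : 1 ≤ N)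
    (hξ : ∀ i < N, ξ i < ξ (i + 1)) :
    ∑ k ∈ Finset.range N, (1 / ((N : ℝ) * (ξ (k + 1) - ξ k))) * ((1 / ε ^ 2) *
        ((∑ j ∈ Finset.range N,
          ((Hf ε (ξ (k + 1) - ξ j) - Hf ε (ξ k - ξ j)) -
            (Hf ε (ξ (k + 1) - ξ (j + 1)) - Hf ε (ξ k - ξ (j + 1)))) *
          (1 / ((N : ℝ) * (ξ (j + 1) - ξ j)))) -
          (ξ (k + 1) - ξ k) * (1 / ((N : ℝ) * (ξ (k + 1) - ξ k))))) ≤ 0 := by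
  show ∑ k ∈ Finset.range N, (1 / ((N : ℝ) * (ξ (k + 1) - ξ k))) * ((1 / ε ^ 2) *
        ((∑ j ∈ Finset.range N, Aform ε ξ k j *
          (1 / ((N : ℝ) * (ξ (j + 1) - ξ j)))) -
          (ξ (k + 1) - ξ k) * (1 / ((N : ℝ) * (ξ (k + 1) - ξ k))))) ≤ 0
  have perk : ∀ k ∈ Finset.range N,
      (1 / ((N : ℝ) * (ξ (k + 1) - ξ k))) * ((1 / ε ^ 2) *
        ((∑ j ∈ Finset.range N, Aform ε ξ k j * (1 / ((N : ℝ) * (ξ (j + 1) - ξ j)))) -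
          (ξ (k + 1) - ξ k) * (1 / ((N : ℝ) * (ξ (k + 1) - ξ k)))))
      = (1 / ε ^ 2) *
          ((∑ j ∈ Finset.range N, Aform ε ξ k j *
            ((1 / ((N : ℝ) * (ξ (k + 1) - ξ k))) * (1 / ((N : ℝ) * (ξ (j + 1) - ξ j))))) -
            (ξ (k + 1) - ξ k) * (1 / ((N : ℝ) * (ξ (k + 1) - ξ k))) ^ 2) := by
    intro k _
    rw [show ∀ cc ee S t : ℝ, cc * (ee * (S - t)) = ee * (cc * S - cc * t) from
      fun _ _ _ _ => by ring]
    congr 1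
    congr 1
    · rw [Finset.mul_sum]
      exact Finset.sum_congr rfl fun j _ => by ring
    · ring
  rw [Finset.sum_congr rfl perk, ← Finset.mul_sum, Finset.sum_sub_distrib]
  have h := quad_bound (N := N) (Aform ε ξ)
    (fun k => 1 / ((N : ℝ) * (ξ (k + 1) - ξ k))) (fun k => ξ (k + 1) - ξ k)
    (Aform_symm ε ξ)
    (fun k hk j hj hjk => Aform_nonneg hε hξ (Finset.mem_range.mp hk) (Finset.mem_range.mp hj) hjk)
    (fun k hk => Aform_rowsum ε hε hξ (Finset.mem_range.mp hk))
  have h' : ∑ k ∈ Finset.range N, ∑ j ∈ Finset.range N, Aform ε ξ k j *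
        ((1 / ((N : ℝ) * (ξ (k + 1) - ξ k))) * (1 / ((N : ℝ) * (ξ (j + 1) - ξ j))))
      ≤ ∑ k ∈ Finset.range N, (ξ (k + 1) - ξ k) * (1 / ((N : ℝ) * (ξ (k + 1) - ξ k))) ^ 2 := h
  have hpos2 : (0 : ℝ) ≤ 1 / ε ^ 2 := by positivity
  nlinarith [mul_nonneg hpos2 (sub_nonneg.mpr h')]

/-- entropy identity and entropy dissipation.
For all `t ≥ 0`,
`∫ ρ^N log ρ^N (t) - ∫₀ᵗ ∫ ρ^N (1/ε²)(W_ε ∗ ρ^N - ρ^N) dx dτ = ∫ ρ^N log ρ^N (0)`,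
and moreover `∫ ρ^N log ρ^N (t) ≤ ∫ ρ^N log ρ^N (0)`
(the integrand `ρ log ρ` vanishes where `ρ^N = 0`, consistently with `Real.log 0 = 0`). -/
theorem stmt9 (ε : ℝ) (hε : 0 < ε) (N : ℕ) (hN : 1 ≤ N) (x : ℝ → ℕ → ℝ)
    (hx : IsParticleSol ε N x) :
    ∀ t : ℝ, 0 ≤ t →
      ((∫ y, discDens N x y t * Real.log (discDens N x y t)) -
        ∫ τ in (0:ℝ)..t, ∫ y, discDens N x y τ *
          ((1 / ε ^ 2) *
            (conv (Morse ε) (fun z => discDens N x z τ) y - discDens N x y τ)) =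
        ∫ y, discDens N x y 0 * Real.log (discDens N x y 0)) ∧
      (∫ y, discDens N x y t * Real.log (discDens N x y t)) ≤
        ∫ y, discDens N x y 0 * Real.log (discDens N x y 0) := by
  obtain ⟨hord, hder⟩ := hx
  have hNne : (N : ℝ) ≠ 0 := Nat.cast_ne_zero.mpr (by omega)
  set E : ℝ → ℝ := fun τ => -(1 / (N : ℝ)) * ∑ k ∈ Finset.range N,
    Real.log ((N : ℝ) * (x τ (k + 1) - x τ k)) with hE
  set Dv : ℝ → ℝ := fun τ => -(1 / (N : ℝ)) * ∑ k ∈ Finset.range N,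
    ((N : ℝ) * (particleRHS ε N (x τ) (k + 1) - particleRHS ε N (x τ) k)) /
      ((N : ℝ) * (x τ (k + 1) - x τ k)) with hDv
  have hEder : ∀ τ ∈ Set.Ici (0:ℝ), HasDerivWithinAt E (Dv τ) (Set.Ici 0) τ := by
    intro τ hτ
    have hsum : HasDerivWithinAt
        (fun s => ∑ k ∈ Finset.range N, Real.log ((N : ℝ) * (x s (k + 1) - x s k)))
        (∑ k ∈ Finset.range N,
          ((N : ℝ) * (particleRHS ε N (x τ) (k + 1) - particleRHS ε N (x τ) k)) /
            ((N : ℝ) * (x τ (k + 1) - x τ k))) (Set.Ici 0) τ := by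
      apply HasDerivWithinAt.fun_sum
      intro k hk
      have hkN := Finset.mem_range.mp hk
      have h1 := hder (k + 1) (by omega) τ hτ
      have h2 := hder k (by omega) τ hτ
      have hd := (h1.sub h2).const_mul ((N : ℝ))
      have hne : (N : ℝ) * (x τ (k + 1) - x τ k) ≠ 0 :=
        mul_ne_zero hNne (ne_of_gt (sub_pos.mpr (hord τ hτ k hkN)))
      exact hd.log hne
    exact hsum.const_mul _
  have hxc : ∀ i, i ≤ N → ContinuousOn (fun s => x s i) (Set.Ici (0:ℝ)) :=
    fun i hi τ hτ => (hder i hi τ hτ).continuousWithinAt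
  have hpc : ∀ i, i ≤ N → ContinuousOn (fun τ => particleRHS ε N (x τ) i) (Set.Ici (0:ℝ)) := by
    intro i hi
    simp only [particleRHS]
    apply ContinuousOn.mul continuousOn_const
    apply continuousOn_finset_sum
    intro j hj
    have hjN := Finset.mem_range.mp hj
    apply ContinuousOn.div
    · exact ((morse_cont ε).comp_continuousOn ((hxc (j + 1) (by omega)).sub (hxc i hi))).sub
        ((morse_cont ε).comp_continuousOn ((hxc j (by omega)).sub (hxc i hi)))
    · exact (hxc (j + 1) (by omega)).sub (hxc j (by omega))
    · intro τ hτ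
      exact ne_of_gt (sub_pos.mpr (hord τ hτ j hjN))
  have hcd : ContinuousOn Dv (Set.Ici (0:ℝ)) := by
    rw [hDv]
    apply ContinuousOn.mul continuousOn_const
    apply continuousOn_finset_sum
    intro k hk
    have hkN := Finset.mem_range.mp hk
    apply ContinuousOn.div
    · exact continuousOn_const.mul ((hpc (k + 1) (by omega)).sub (hpc k (by omega)))
    · exact continuousOn_const.mul ((hxc (k + 1) (by omega)).sub (hxc k (by omega)))
    · intro τ hτ
      exact mul_ne_zero hNne (ne_of_gt (sub_pos.mpr (hord τ hτ k hkN)))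
  have hEc : ContinuousOn E (Set.Ici (0:ℝ)) := fun τ hτ => (hEder τ hτ).continuousWithinAt
  intro t ht
  have huicc : Set.uIcc (0:ℝ) t = Set.Icc 0 t := Set.uIcc_of_le ht
  have hIccsub : Set.Icc (0:ℝ) t ⊆ Set.Ici 0 := fun u hu => hu.1
  have hDint : IntervalIntegrable Dv volume 0 t :=
    (hcd.mono (huicc ▸ hIccsub)).intervalIntegrable
  have hftc : ∫ τ in (0:ℝ)..t, Dv τ = E t - E 0 :=
    intervalIntegral.integral_eq_sub_of_hasDeriv_right_of_le ht (hEc.mono hIccsub)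
      (fun τ hτ => (hEder τ hτ.1.le).mono (fun y hy => le_trans hτ.1.le (le_of_lt hy)))
      hDint
  have hent : ∀ τ, 0 ≤ τ →
      (∫ y, discDens N x y τ * Real.log (discDens N x y τ)) = E τ :=
    fun τ hτ => ent_val hN (hord τ hτ)
  have hdiss : ∀ τ, 0 ≤ τ →
      (∫ y, discDens N x y τ * ((1 / ε ^ 2) *
        (conv (Morse ε) (fun z => discDens N x z τ) y - discDens N x y τ))) = Dv τ := by
    intro τ hτ
    have h1 := diss_val ε hε hN (ξ := x τ) (hord τ hτ)
    have h2 := dform_eq ε hε hN (ξ := x τ) (hord τ hτ)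
    exact h1.trans h2.symm
  have hint_eq : (∫ τ in (0:ℝ)..t, ∫ y, discDens N x y τ *
      ((1 / ε ^ 2) * (conv (Morse ε) (fun z => discDens N x z τ) y - discDens N x y τ)))
      = ∫ τ in (0:ℝ)..t, Dv τ :=
    intervalIntegral.integral_congr (fun τ hτ => hdiss τ (by
      rw [huicc] at hτ; exact hτ.1))
  constructor
  · rw [hent t ht, hent 0 le_rfl, hint_eq, hftc]
    ring
  · rw [hent t ht, hent 0 le_rfl]
    have hDnp : ∀ τ ∈ Set.Icc (0:ℝ) t, Dv τ ≤ 0 := by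
      intro τ hτ
      have h2 : Dv τ = ∑ k ∈ Finset.range N,
          (1 / ((N : ℝ) * (x τ (k + 1) - x τ k))) * ((1 / ε ^ 2) *
          ((∑ j ∈ Finset.range N,
            ((Hf ε (x τ (k + 1) - x τ j) - Hf ε (x τ k - x τ j)) -
              (Hf ε (x τ (k + 1) - x τ (j + 1)) - Hf ε (x τ k - x τ (j + 1)))) *
            (1 / ((N : ℝ) * (x τ (j + 1) - x τ j)))) -
            (x τ (k + 1) - x τ k) * (1 / ((N : ℝ) * (x τ (k + 1) - x τ k))))) :=
        dform_eq ε hε hN (ξ := x τ) (hord τ hτ.1)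
      rw [h2]
      exact diss_nonpos ε hε hN (hord τ hτ.1)
    have h0 : 0 ≤ ∫ τ in (0:ℝ)..t, -Dv τ :=
      intervalIntegral.integral_nonneg ht (fun u hu => neg_nonneg.mpr (hDnp u hu))
    rw [intervalIntegral.integral_neg] at h0
    linarith [hftc]
end Slice
end

section
/- Let N ≥ 1 be an integer, let ρ̃ : ℝ → [0,∞) be measurable with ∫_ℝ ρ̃ = 1, and let x̄_0 < x̄_1 < ⋯ < x̄_N be real numbers with supp ρ̃ ⊆ [x̄_0, x̄_N] and ∫_{x̄_i}^{x̄_{i+1}} ρ̃(y) dy = 1/N for every i = 0,…,N−1. Define ρ̄^N(x) = Σ_{i=0}^{N−1} (1/(N·(x̄_{i+1} − x̄_i)))·1_{[x̄_i, x̄_{i+1})}(x). Let L > 0 with x̄_0 < −L and x̄_N > L, and let φ ∈ C¹(ℝ) with supp φ ⊆ [−L, L]. Then | ∫_ℝ (ρ̄^N(x) − ρ̃(x))·φ(x) dx | ≤ (4·‖φ‖_{L^∞} + 2L·‖φ'‖_{L^∞}) / N. -/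
open MeasureTheory Real Set

/-- weak consistency of the atomisation. For a compactly supported
probability density `ρ̃` atomised by grid points `x̄_0 < ⋯ < x̄_N` carrying mass `1/N`
per cell, and a `C¹` test function `φ` supported in `[-L,L] ⊂ (x̄_0, x̄_N)`,
`|∫ (ρ̄^N - ρ̃) φ| ≤ (4‖φ‖_∞ + 2L‖φ'‖_∞)/N`. -/
theorem stmt12 (N : ℕ) (hN : 1 ≤ N) (ρ : ℝ → ℝ) (hmeas : Measurable ρ)
    (hnn : ∀ y, 0 ≤ ρ y) (hint : MeasureTheory.Integrable ρ) (hmass : (∫ y, ρ y) = 1)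
    (xb : ℕ → ℝ) (hord : ∀ i < N, xb i < xb (i + 1))
    (hsupp : Function.support ρ ⊆ Set.Icc (xb 0) (xb N))
    (hcell : ∀ i < N, (∫ y in (xb i)..(xb (i + 1)), ρ y) = 1 / N)
    (L : ℝ) (hL : 0 < L) (hL0 : xb 0 < -L) (hLN : L < xb N)
    (φ φ' : ℝ → ℝ) (Cφ Cφ' : ℝ)
    (hφ : ∀ y, HasDerivAt φ (φ' y) y) (hφ'c : Continuous φ')
    (hφsupp : Function.support φ ⊆ Set.Icc (-L) L)
    (hCφ : ∀ y, |φ y| ≤ Cφ) (hCφ' : ∀ y, |φ' y| ≤ Cφ') :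
    |∫ y, ((∑ i ∈ Finset.range N,
        Set.indicator (Set.Ico (xb i) (xb (i + 1)))
          (fun _ => 1 / ((N : ℝ) * (xb (i + 1) - xb i))) y) - ρ y) * φ y| ≤
      (4 * Cφ + 2 * L * Cφ') / N := by
  classical
  have hN0 : (0:ℝ) < N := by exact_mod_cast hN
  have hCφ0 : 0 ≤ Cφ := le_trans (abs_nonneg _) (hCφ 0)
  have hCφ'0 : 0 ≤ Cφ' := le_trans (abs_nonneg _) (hCφ' 0)
  have hφdiff : Differentiable ℝ φ := fun y => (hφ y).differentiableAt
  have hφcont : Continuous φ := hφdiff.continuous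
  -- Lipschitz bound for φ
  have hlip : ∀ u v : ℝ, |φ u - φ v| ≤ Cφ' * |u - v| := by
    have key : ∀ u v : ℝ, v ≤ u → |φ u - φ v| ≤ Cφ' * |u - v| := by
      intro u v h
      have := norm_image_sub_le_of_norm_deriv_le_segment' (f := φ) (f' := φ')
        (a := v) (b := u) (C := Cφ')
        (fun x _ => (hφ x).hasDerivWithinAt) (fun x _ => by
          simpa [Real.norm_eq_abs] using hCφ' x) u (right_mem_Icc.2 h)
      rw [Real.norm_eq_abs] at this
      calc |φ u - φ v| ≤ Cφ' * (u - v) := this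
        _ ≤ Cφ' * |u - v| := by
            apply mul_le_mul_of_nonneg_left (le_abs_self _) hCφ'0
    intro u v
    rcases le_total v u with h | h
    · exact key u v h
    · have := key v u h
      rwa [abs_sub_comm (φ v) (φ u), abs_sub_comm v u] at this
  -- monotonicity of the grid
  have hmono : ∀ i j : ℕ, i ≤ j → j ≤ N → xb i ≤ xb j := by
    intro i j hij
    induction j, hij using Nat.le_induction with
    | base => exact fun _ => le_rfl
    | succ n hn ih => exact fun hnN => (ih (by omega)).trans (hord n (by omega)).le
  -- pairwise disjointness of cells
  have hdisj : ∀ i < N, ∀ j < N, i ≠ j →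
      Disjoint (Ico (xb i) (xb (i+1))) (Ico (xb j) (xb (j+1))) := by
    intro i hi j hj hij
    rcases hij.lt_or_gt with h | h
    · exact Set.Ico_disjoint_Ico.2 (le_trans (min_le_left _ _)
        (le_trans (hmono (i+1) j (by omega) (by omega)) (le_max_right _ _)))
    · exact Set.Ico_disjoint_Ico.2 (le_trans (min_le_right _ _)
        (le_trans (hmono (j+1) i (by omega) (by omega)) (le_max_left _ _)))
  -- clamp function
  set g : ℕ → ℝ := fun t => max (-L) (min (xb t) L) with hg
  have hgmono : ∀ i < N, g i ≤ g (i+1) := fun i hi =>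
    max_le_max le_rfl (min_le_min (hord i hi).le le_rfl)
  -- the piecewise constant density
  set F : ℝ → ℝ := fun y => ((∑ i ∈ Finset.range N,
        Set.indicator (Set.Ico (xb i) (xb (i + 1)))
          (fun _ => 1 / ((N : ℝ) * (xb (i + 1) - xb i))) y) - ρ y) * φ y with hF
  show |∫ y, F y| ≤ (4 * Cφ + 2 * L * Cφ') / N
  have hfsum_int : Integrable (fun y => ∑ i ∈ Finset.range N,
      Set.indicator (Set.Ico (xb i) (xb (i + 1)))
        (fun _ => 1 / ((N : ℝ) * (xb (i + 1) - xb i))) y) := by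
    apply integrable_finset_sum
    intro i _
    rw [integrable_indicator_iff measurableSet_Ico]
    exact integrableOn_const measure_Ico_lt_top.ne
  have hFint : Integrable F := by
    have h1 := (hfsum_int.sub hint).bdd_mul (c := Cφ)
      hφcont.aestronglyMeasurable
      (Filter.Eventually.of_forall fun y => by simpa [Real.norm_eq_abs] using hCφ y)
    exact h1.congr (Filter.Eventually.of_forall fun y => mul_comm _ _)
  -- union of cells
  have hU : ∀ n ≤ N, (⋃ i ∈ Finset.range n, Ico (xb i) (xb (i+1))) = Ico (xb 0) (xb n) := by
    intro n hn
    induction n with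
    | zero => simp
    | succ n ih =>
      rw [Finset.range_add_one, Finset.set_biUnion_insert, ih (by omega), Set.union_comm,
        Set.Ico_union_Ico_eq_Ico (hmono 0 n (by omega) (by omega)) (hord n (by omega)).le]
  -- splitting the integral
  have hpair : ((Finset.range N : Finset ℕ) : Set ℕ).Pairwise
      (Function.onFun Disjoint (fun i => Ico (xb i) (xb (i+1)))) := by
    intro i hi j hj hij
    exact hdisj i (by simpa using hi) j (by simpa using hj) hij
  have hsplit : ∫ y, F y = ∑ i ∈ Finset.range N, ∫ y in Ico (xb i) (xb (i+1)), F y := by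
    rw [← MeasureTheory.integral_biUnion_finset (Finset.range N)
      (fun i _ => measurableSet_Ico) hpair (fun i _ => hFint.integrableOn)]
    rw [hU N le_rfl]
    symm
    apply setIntegral_eq_integral_of_forall_compl_eq_zero
    intro y hy
    by_cases hφy : φ y = 0
    · simp [hF, hφy]
    · exfalso
      have hyI : y ∈ Icc (-L) L := hφsupp hφy
      exact hy ⟨by linarith [hyI.1], by linarith [hyI.2]⟩
  -- cell integrals of ρ and of the constant
  have hcellIco : ∀ i < N, ∫ y in Ico (xb i) (xb (i+1)), ρ y = 1 / N := by
    intro i hi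
    rw [MeasureTheory.integral_Ico_eq_integral_Ioo,
      ← MeasureTheory.integral_Ioc_eq_integral_Ioo,
      ← intervalIntegral.integral_of_le (hord i hi).le]
    exact hcell i hi
  have hconst : ∀ i < N,
      ∫ _ in Ico (xb i) (xb (i+1)), (1 / ((N:ℝ) * (xb (i+1) - xb i))) = 1 / N := by
    intro i hi
    have h := hord i hi
    rw [setIntegral_const, Real.volume_real_Ico_of_le (by linarith),
      smul_eq_mul]
    field_simp
    exact div_self (by linarith : (0:ℝ) < xb (i+1) - xb i).ne'
  -- key per-cell estimate
  have hkey : ∀ i < N, ∀ m M : ℝ, 0 ≤ M →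
      (∀ y ∈ Ico (xb i) (xb (i+1)), |φ y - m| ≤ M) →
      |∫ y in Ico (xb i) (xb (i+1)),
        (1 / ((N:ℝ) * (xb (i+1) - xb i)) - ρ y) * φ y| ≤ 2 * M / N := by
    intro i hi m M hM hbd
    have hab : xb i < xb (i+1) := hord i hi
    set cc : ℝ := 1 / ((N:ℝ) * (xb (i+1) - xb i)) with hcc
    have hccnn : 0 ≤ cc := by
      have hpos : 0 < (N:ℝ) * (xb (i+1) - xb i) := mul_pos hN0 (by linarith)
      rw [hcc]
      exact le_of_lt (div_pos one_pos hpos)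
    have hρint : IntegrableOn ρ (Ico (xb i) (xb (i+1))) := hint.integrableOn
    have hcint : IntegrableOn (fun _ => cc) (Ico (xb i) (xb (i+1))) :=
      integrableOn_const measure_Ico_lt_top.ne
    have hsubint : IntegrableOn (fun y => cc - ρ y) (Ico (xb i) (xb (i+1))) :=
      hcint.sub hρint
    have hmul : ∀ (c : ℝ) (ψ : ℝ → ℝ), Continuous ψ → (∀ y, ‖ψ y‖ ≤ c) →
        IntegrableOn (fun y => (cc - ρ y) * ψ y) (Ico (xb i) (xb (i+1))) := by
      intro c ψ hψc hψb
      have := hsubint.bdd_mul (c := c) hψc.aestronglyMeasurable.restrict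
        (Filter.Eventually.of_forall hψb)
      exact this.congr (Filter.Eventually.of_forall fun y => mul_comm _ _)
    have hmulφ : IntegrableOn (fun y => (cc - ρ y) * φ y) (Ico (xb i) (xb (i+1))) :=
      hmul Cφ φ hφcont (fun y => by simpa [Real.norm_eq_abs] using hCφ y)
    have hmulm : IntegrableOn (fun y => (cc - ρ y) * (φ y - m))
        (Ico (xb i) (xb (i+1))) := by
      refine hmul (Cφ + |m|) (fun y => φ y - m) (hφcont.sub continuous_const) fun y => ?_
      rw [Real.norm_eq_abs]
      calc |φ y - m| ≤ |φ y| + |m| := abs_sub _ _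
        _ ≤ Cφ + |m| := by linarith [hCφ y]
    have hzero : ∫ y in Ico (xb i) (xb (i+1)), (cc - ρ y) = 0 := by
      rw [MeasureTheory.integral_sub hcint hρint, hconst i hi, hcellIco i hi, sub_self]
    have hrw : ∫ y in Ico (xb i) (xb (i+1)), (cc - ρ y) * φ y
        = ∫ y in Ico (xb i) (xb (i+1)), (cc - ρ y) * (φ y - m) := by
      rw [← sub_eq_zero, ← MeasureTheory.integral_sub hmulφ hmulm]
      simp only [show ∀ y : ℝ, (cc - ρ y) * φ y - (cc - ρ y) * (φ y - m)
        = m * (cc - ρ y) from fun y => by ring]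
      rw [MeasureTheory.integral_const_mul, hzero, mul_zero]
    rw [hrw]
    have habsint : IntegrableOn (fun y => |cc - ρ y| * |φ y - m|)
        (Ico (xb i) (xb (i+1))) :=
      hmulm.abs.congr (Filter.Eventually.of_forall fun y => abs_mul _ _)
    have hrhsint : IntegrableOn (fun y => (cc + ρ y) * M) (Ico (xb i) (xb (i+1))) := by
      have := (hcint.add hρint).mul_const M
      exact this.congr (Filter.Eventually.of_forall fun y => by simp [Pi.add_apply])
    calc |∫ y in Ico (xb i) (xb (i+1)), (cc - ρ y) * (φ y - m)|
        ≤ ∫ y in Ico (xb i) (xb (i+1)), |cc - ρ y| * |φ y - m| := by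
          simpa [Real.norm_eq_abs, abs_mul] using
            norm_integral_le_integral_norm (μ := volume.restrict (Ico (xb i) (xb (i+1))))
              (fun y => (cc - ρ y) * (φ y - m))
      _ ≤ ∫ y in Ico (xb i) (xb (i+1)), (cc + ρ y) * M := by
          apply setIntegral_mono_on habsint hrhsint measurableSet_Ico
          intro y hy
          have h1 := hnn y
          apply mul_le_mul _ (hbd y hy) (abs_nonneg _) (by linarith)
          rw [abs_le]
          constructor <;> linarith
      _ = 2 * M / N := by
          rw [MeasureTheory.integral_mul_const,
            MeasureTheory.integral_add hcint hρint, hconst i hi, hcellIco i hi]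
          ring
  -- per-cell bound
  have hcellbd : ∀ i ∈ Finset.range N,
      |∫ y in Ico (xb i) (xb (i+1)), F y| ≤
        (if -L ∈ Ico (xb i) (xb (i+1)) then 2*Cφ/N else 0)
      + (if L ∈ Ico (xb i) (xb (i+1)) then 2*Cφ/N else 0)
      + Cφ' * (g (i+1) - g i) / N := by
    intro i hi'
    have hi : i < N := Finset.mem_range.1 hi'
    have hab : xb i < xb (i+1) := hord i hi
    have hglast : 0 ≤ Cφ' * (g (i+1) - g i) / N := by
      have := hgmono i hi
      have h1 : 0 ≤ g (i+1) - g i := by linarith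
      positivity
    have hif1 : 0 ≤ (if -L ∈ Ico (xb i) (xb (i+1)) then 2*Cφ/N else 0) := by
      split_ifs
      · positivity
      · exact le_rfl
    have hif2 : 0 ≤ (if L ∈ Ico (xb i) (xb (i+1)) then 2*Cφ/N else 0) := by
      split_ifs
      · positivity
      · exact le_rfl
    -- replace F by its value on the cell
    have hFcell : ∫ y in Ico (xb i) (xb (i+1)), F y
        = ∫ y in Ico (xb i) (xb (i+1)),
            (1/((N:ℝ)*(xb (i+1) - xb i)) - ρ y) * φ y := by
      apply setIntegral_congr_fun measurableSet_Ico
      intro y hy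
      simp only [hF]
      congr 2
      rw [Finset.sum_eq_single i]
      · rw [Set.indicator_of_mem hy]
      · intro j hj hne
        apply Set.indicator_of_notMem
        intro hyj
        exact Set.disjoint_left.1 (hdisj j (Finset.mem_range.1 hj) i hi hne) hyj hy
      · intro habs
        exact absurd hi' habs
    rw [hFcell]
    by_cases hemp : ∀ y ∈ Ico (xb i) (xb (i+1)), y ∉ Icc (-L) L
    · -- φ vanishes on the cell
      have hz : ∫ y in Ico (xb i) (xb (i+1)),
          (1/((N:ℝ)*(xb (i+1) - xb i)) - ρ y) * φ y = 0 := by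
        have heq : EqOn (fun y => (1/((N:ℝ)*(xb (i+1) - xb i)) - ρ y) * φ y)
            (fun _ => (0:ℝ)) (Ico (xb i) (xb (i+1))) := by
          intro y hy
          have hφy : φ y = 0 := by
            by_contra h
            exact hemp y hy (hφsupp h)
          simp [hφy]
        rw [setIntegral_congr_fun measurableSet_Ico heq]
        simp
      rw [hz, abs_zero]
      linarith
    · push_neg at hemp
      obtain ⟨z, hz1, hz2⟩ := hemp
      by_cases hin : -L ≤ xb i ∧ xb (i+1) ≤ L
      · -- interior cell
        have hM : 0 ≤ Cφ' * ((xb (i+1) - xb i)/2) :=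
          mul_nonneg hCφ'0 (by linarith)
        have hbd : ∀ y ∈ Ico (xb i) (xb (i+1)),
            |φ y - φ ((xb i + xb (i+1))/2)| ≤ Cφ' * ((xb (i+1) - xb i)/2) := by
          intro y hy
          refine (hlip y ((xb i + xb (i+1))/2)).trans ?_
          apply mul_le_mul_of_nonneg_left _ hCφ'0
          rw [abs_le]
          constructor
          · have := hy.1; linarith
          · have := hy.2; linarith
        have hd := hkey i hi (φ ((xb i + xb (i+1))/2))
          (Cφ' * ((xb (i+1) - xb i)/2)) hM hbd
        have hga : g i = xb i := by
          have h1 : xb i ≤ L := hab.le.trans hin.2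
          simp only [hg]
          rw [min_eq_left h1, max_eq_right hin.1]
        have hgb : g (i+1) = xb (i+1) := by
          have h1 : -L ≤ xb (i+1) := hin.1.trans hab.le
          simp only [hg]
          rw [min_eq_left hin.2, max_eq_right h1]
        have heval : 2 * (Cφ' * ((xb (i+1) - xb i)/2)) / N
            = Cφ' * (g (i+1) - g i) / N := by
          rw [hga, hgb]; ring
        rw [heval] at hd
        linarith
      · -- boundary cell
        have hd := hkey i hi 0 Cφ hCφ0 (fun y _ => by simpa using hCφ y)
        have hbdry : (-L ∈ Ico (xb i) (xb (i+1))) ∨ (L ∈ Ico (xb i) (xb (i+1))) := by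
          rcases not_and_or.1 hin with h | h
          · push_neg at h
            exact Or.inl ⟨h.le, lt_of_le_of_lt hz2.1 hz1.2⟩
          · push_neg at h
            exact Or.inr ⟨hz1.1.trans hz2.2, h⟩
        rcases hbdry with h | h
        · rw [if_pos h]
          linarith
        · rw [if_pos h]
          linarith
  -- assembling
  have huniq : ∀ p : ℝ,
      ∑ i ∈ Finset.range N, (if p ∈ Ico (xb i) (xb (i+1)) then 2*Cφ/N else 0)
        ≤ 2*Cφ/N := by
    intro p
    rw [← Finset.sum_filter, Finset.sum_const, nsmul_eq_mul]
    have hcard : ((Finset.range N).filter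
        (fun i => p ∈ Ico (xb i) (xb (i+1)))).card ≤ 1 := by
      apply Finset.card_le_one.2
      intro i hi j hj
      simp only [Finset.mem_filter, Finset.mem_range] at hi hj
      by_contra hne
      exact Set.disjoint_left.1 (hdisj i hi.1 j hj.1 hne) hi.2 hj.2
    calc (((Finset.range N).filter
          (fun i => p ∈ Ico (xb i) (xb (i+1)))).card : ℝ) * (2*Cφ/N)
        ≤ 1 * (2*Cφ/N) := by
          apply mul_le_mul_of_nonneg_right _ (by positivity)
          exact_mod_cast hcard
      _ = 2*Cφ/N := one_mul _
  have htel : ∑ i ∈ Finset.range N, Cφ' * (g (i+1) - g i) / N = Cφ' * (2*L) / N := by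
    have hrw : ∀ i : ℕ, Cφ' * (g (i+1) - g i) / N = Cφ'/N * (g (i+1) - g i) :=
      fun i => by ring
    simp only [hrw]
    rw [← Finset.mul_sum, Finset.sum_range_sub]
    have hgN : g N = L := by
      simp only [hg]
      rw [min_eq_right hLN.le, max_eq_right (by linarith)]
    have hg0' : g 0 = -L := by
      simp only [hg]
      rw [min_eq_left (by linarith), max_eq_left hL0.le]
    rw [hgN, hg0']
    ring
  rw [hsplit]
  calc |∑ i ∈ Finset.range N, ∫ y in Ico (xb i) (xb (i+1)), F y|
      ≤ ∑ i ∈ Finset.range N, |∫ y in Ico (xb i) (xb (i+1)), F y| :=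
        Finset.abs_sum_le_sum_abs _ _
    _ ≤ ∑ i ∈ Finset.range N,
        ((if -L ∈ Ico (xb i) (xb (i+1)) then 2*Cφ/N else 0)
        + (if L ∈ Ico (xb i) (xb (i+1)) then 2*Cφ/N else 0)
        + Cφ' * (g (i+1) - g i) / N) := Finset.sum_le_sum hcellbd
    _ ≤ 2*Cφ/N + 2*Cφ/N + Cφ' * (2*L) / N := by
        rw [Finset.sum_add_distrib, Finset.sum_add_distrib, htel]
        have h1 := huniq (-L)
        have h2 := huniq L
        linarith
    _ = (4 * Cφ + 2 * L * Cφ') / N := by ring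
end
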